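/- arXiv:2507.15141 — 5 statements merged into one kernel-verified Lean document; each statement's English description precedes it below -/
import Mathlib

section
/- Let d ≥ 2 and let n ≥ 2d−2 be an even integer. Let c ∈ (S_d)^n be a tuple all of whose entries are transpositions, whose entries generate a transitive subgroup of S_d, and whose product satisfies c_0 c_1 ⋯ c_{n−1} = 1. Then there exist g ∈ S_d and β ∈ B_n such that β·(g c_0 g⁻¹, …, g c_{n−1} g⁻¹) = c⁰, the standard tuple. (This is the combinatorial form of the statement that for fixed degree and number of branch points there is a unique connected simple branched cover of S², so its branch data can be put in standard form.) -/
/-- The `i`-th Hurwitz move on `n`-tuples of elements of a group `G`: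
it replaces `(…, cᵢ, cᵢ₊₁, …)` by `(…, cᵢ cᵢ₊₁ cᵢ⁻¹, cᵢ, …)` and is the
identity when `i + 1 ≥ n`. -/
def hurwitzMove {G : Type*} [Group G] {n : ℕ} (i : ℕ) (c : Fin n → G) : Fin n → G :=
  fun k =>
    if _h1 : (k : ℕ) = i then
      if h2 : i + 1 < n then
        c ⟨i, Nat.lt_of_succ_lt h2⟩ * c ⟨i + 1, h2⟩ * (c ⟨i, Nat.lt_of_succ_lt h2⟩)⁻¹
      else c k
    else if h2 : (k : ℕ) = i + 1 then
      c ⟨i, by have := k.isLt; omega⟩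
    else c k

/-- The braid relations on the free group on `n - 1` generators `σ_0, …, σ_{n-2}`:
commutation `σ_i σ_j = σ_j σ_i` for `|i - j| ≥ 2` and the braid relation
`σ_i σ_{i+1} σ_i = σ_{i+1} σ_i σ_{i+1}`. -/
def braidRels (n : ℕ) : Set (FreeGroup (Fin (n - 1))) :=
  {r | (∃ i j : Fin (n - 1), (i : ℕ) + 2 ≤ (j : ℕ) ∧
          r = FreeGroup.of i * FreeGroup.of j * (FreeGroup.of i)⁻¹ * (FreeGroup.of j)⁻¹) ∨
       (∃ i j : Fin (n - 1), (j : ℕ) = (i : ℕ) + 1 ∧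
          r = FreeGroup.of i * FreeGroup.of j * FreeGroup.of i *
              (FreeGroup.of j * FreeGroup.of i * FreeGroup.of j)⁻¹)}

/-- The braid group `B_n`, presented on generators `σ_0, …, σ_{n-2}` subject to
the braid relations. -/
abbrev BraidGroup (n : ℕ) := PresentedGroup (braidRels n)

/-- The Artin generator `σ_i` of the braid group `B_n` (equal to `1` if `i` is
out of range). -/
def braidGen (n i : ℕ) : BraidGroup n :=
  if h : i < n - 1 then PresentedGroup.of (⟨i, h⟩ : Fin (n - 1)) else 1

/-- `φ` is the Hurwitz action of `B_n` on `G^n`, i.e. the group action under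
which each Artin generator `σ_i` acts by the Hurwitz move `h_i`. -/
def IsHurwitzAction {G : Type*} [Group G] {n : ℕ}
    (φ : BraidGroup n →* Equiv.Perm (Fin n → G)) : Prop :=
  ∀ i : ℕ, i + 1 < n → ∀ c : Fin n → G, φ (braidGen n i) c = hurwitzMove i c

/-- The standard tuple `c⁰ ∈ (S_d)^n` (for `d ≥ 2`, `n ≥ 2d - 2`):
`c⁰_{2k} = c⁰_{2k+1}` is the transposition `(d-1-k, d-k)` for `0 ≤ k ≤ d-3`,
and `c⁰_i` is the transposition `(1, 2)` for `2d-4 ≤ i ≤ n-1`.  Points of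
`{1, …, d}` are represented by `Fin d` via `m ↦ m - 1`. -/
def stdTuple (d n : ℕ) : Fin n → Equiv.Perm (Fin d) := fun i =>
  if h : (i : ℕ) + 4 ≤ 2 * d then
    Equiv.swap ⟨d - 2 - (i : ℕ) / 2, by omega⟩ ⟨d - 1 - (i : ℕ) / 2, by omega⟩
  else if h2 : 2 ≤ d then Equiv.swap ⟨0, by omega⟩ ⟨1, by omega⟩ else 1


namespace HurwitzAux

open List

variable {G : Type*} [Group G]

/-- One list-level Hurwitz move. -/
inductive LStep : List G → List G → Prop
  | mk (u : List G) (a b : G) (v : List G) :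
      LStep (u ++ a :: b :: v) (u ++ (a * b * a⁻¹) :: a :: v)

/-- Hurwitz equivalence of lists. -/
def LEq (l l' : List G) : Prop := Relation.EqvGen LStep l l'

theorem LEq.refl (l : List G) : LEq l l := Relation.EqvGen.refl l
theorem LEq.symm {l l' : List G} (h : LEq l l') : LEq l' l := Relation.EqvGen.symm _ _ h
theorem LEq.trans {l₁ l₂ l₃ : List G} (h : LEq l₁ l₂) (h' : LEq l₂ l₃) : LEq l₁ l₃ :=
  Relation.EqvGen.trans _ _ _ h h'
theorem LEq.of_step {l l' : List G} (h : LStep l l') : LEq l l' := Relation.EqvGen.rel _ _ h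

theorem LEq.context {l₁ l₂ : List G} (h : LEq l₁ l₂) (u v : List G) :
    LEq (u ++ l₁ ++ v) (u ++ l₂ ++ v) := by
  induction h with
  | rel x y hxy =>
    obtain ⟨w, a, b, z⟩ := hxy
    apply LEq.of_step
    have : ∀ c d : G, u ++ (w ++ c :: d :: z) ++ v = (u ++ w) ++ c :: d :: (z ++ v) := by
      intro c d; simp
    rw [this, this]
    exact LStep.mk (u ++ w) a b (z ++ v)
  | refl x => exact LEq.refl _
  | symm x y _ ih => exact ih.symm
  | trans x y z _ _ ih₁ ih₂ => exact ih₁.trans ih₂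

theorem LEq.cons (a : G) {l₁ l₂ : List G} (h : LEq l₁ l₂) : LEq (a :: l₁) (a :: l₂) := by
  have := h.context [a] []
  simpa using this

theorem LEq.length {l₁ l₂ : List G} (h : LEq l₁ l₂) : l₁.length = l₂.length := by
  induction h with
  | rel x y hxy => obtain ⟨w, a, b, z⟩ := hxy; simp
  | refl x => rfl
  | symm _ _ _ ih => omega
  | trans _ _ _ _ _ ih₁ ih₂ => omega

theorem LEq.prod {l₁ l₂ : List G} (h : LEq l₁ l₂) : l₁.prod = l₂.prod := by
  induction h with
  | rel x y hxy =>
    obtain ⟨w, a, b, z⟩ := hxy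
    simp [List.prod_append, mul_assoc]
  | refl x => rfl
  | symm _ _ _ ih => exact ih.symm
  | trans _ _ _ _ _ ih₁ ih₂ => exact ih₁.trans ih₂

theorem LEq.closure {l₁ l₂ : List G} (h : LEq l₁ l₂) :
    Subgroup.closure {x | x ∈ l₁} = Subgroup.closure {x | x ∈ l₂} := by
  induction h with
  | rel x y hxy =>
    obtain ⟨w, a, b, z⟩ := hxy
    have ha2 : a ∈ Subgroup.closure {x : G | x ∈ w ++ (a*b*a⁻¹) :: a :: z} :=
      Subgroup.subset_closure (by simp)
    have hc2 : a*b*a⁻¹ ∈ Subgroup.closure {x : G | x ∈ w ++ (a*b*a⁻¹) :: a :: z} :=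
      Subgroup.subset_closure (by simp)
    have ha1 : a ∈ Subgroup.closure {x : G | x ∈ w ++ a :: b :: z} :=
      Subgroup.subset_closure (by simp)
    have hb1 : b ∈ Subgroup.closure {x : G | x ∈ w ++ a :: b :: z} :=
      Subgroup.subset_closure (by simp)
    apply _root_.le_antisymm <;> rw [Subgroup.closure_le] <;> intro g hg <;>
      simp only [Set.mem_setOf_eq, List.mem_append, List.mem_cons] at hg
    · rcases hg with hh | hh | hh | hh
      · exact Subgroup.subset_closure (by simp [hh])
      · rw [hh]; exact ha2
      · rw [hh]
        have h4 := mul_mem (mul_mem (inv_mem ha2) hc2) ha2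
        have h5 : a⁻¹ * (a*b*a⁻¹) * a = b := by group
        rwa [h5] at h4
      · exact Subgroup.subset_closure (by simp [hh])
    · rcases hg with hh | hh | hh | hh
      · exact Subgroup.subset_closure (by simp [hh])
      · rw [hh]; exact mul_mem (mul_mem ha1 hb1) (inv_mem ha1)
      · rw [hh]; exact ha1
      · exact Subgroup.subset_closure (by simp [hh])
  | refl x => rfl
  | symm _ _ _ ih => exact ih.symm
  | trans _ _ _ _ _ ih₁ ih₂ => exact ih₁.trans ih₂

theorem LEq.forall_mem {P : G → Prop} (hP : ∀ g x, P g → P x → P (g * x * g⁻¹))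
    (hPinv : ∀ g x, P g → P x → P (g⁻¹ * x * g))
    {l₁ l₂ : List G} (h : LEq l₁ l₂) : (∀ x ∈ l₁, P x) ↔ (∀ x ∈ l₂, P x) := by
  induction h with
  | rel x y hxy =>
    obtain ⟨w, a, b, z⟩ := hxy
    constructor <;> intro hall q hq <;>
      simp only [List.mem_append, List.mem_cons] at hq
    · rcases hq with hh | hh | hh | hh
      · exact hall q (by simp [hh])
      · rw [hh]; exact hP a b (hall a (by simp)) (hall b (by simp))
      · rw [hh]; exact hall a (by simp)
      · exact hall q (by simp [hh])
    · rcases hq with hh | hh | hh | hh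
      · exact hall q (by simp [hh])
      · rw [hh]; exact hall a (by simp)
      · rw [hh]
        have h2 := hPinv a (a*b*a⁻¹) (hall a (by simp)) (hall (a*b*a⁻¹) (by simp))
        have h3 : a⁻¹ * (a*b*a⁻¹) * a = b := by group
        rwa [h3] at h2
      · exact hall q (by simp [hh])
  | refl x => exact Iff.rfl
  | symm _ _ _ ih => exact ih.symm
  | trans _ _ _ _ _ ih₁ ih₂ => exact ih₁.trans ih₂


/-- P1: an adjacent equal pair of involutions absorbs its right neighbour to the left,
`(t,t,r) ~ (r,t,t)`. -/
theorem leq_P1 {t : G} (htt : t * t = 1) (r : G) (z : List G) :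
    LEq (t :: t :: r :: z) (r :: t :: t :: z) := by
  have hinv : t⁻¹ = t := by
    rw [eq_comm, eq_inv_iff_mul_eq_one, htt]
  have s1 : LEq (t :: t :: r :: z) (t :: (t * r * t⁻¹) :: t :: z) :=
    LEq.of_step (by simpa using LStep.mk [t] t r z)
  have s2 : LEq (t :: (t * r * t⁻¹) :: t :: z)
      ((t * (t * r * t⁻¹) * t⁻¹) :: t :: t :: z) :=
    LEq.of_step (by simpa using LStep.mk [] t (t * r * t⁻¹) (t :: z))
  have h3 : t * (t * r * t⁻¹) * t⁻¹ = r := by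
    rw [hinv]
    calc t * (t * r * t) * t = (t * t) * r * (t * t) := by group
    _ = r := by rw [htt]; group
  rw [h3] at s2
  exact s1.trans s2

/-- The pair `(t,t)` conjugates in place by its right neighbour's conjugation,
`(r,t,t) ~ (rtr⁻¹, rtr⁻¹, r)`. -/
theorem leq_P2 (r t : G) (z : List G) :
    LEq (r :: t :: t :: z) ((r * t * r⁻¹) :: (r * t * r⁻¹) :: r :: z) := by
  have s1 : LEq (r :: t :: t :: z) ((r * t * r⁻¹) :: r :: t :: z) :=
    LEq.of_step (by simpa using LStep.mk [] r t (t :: z))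
  have s2 : LEq ((r * t * r⁻¹) :: r :: t :: z)
      ((r * t * r⁻¹) :: (r * t * r⁻¹) :: r :: z) :=
    LEq.of_step (by simpa using LStep.mk [r * t * r⁻¹] r t z)
  exact s1.trans s2

/-- C1: in-place conjugation of the pair by its right neighbour. -/
theorem leq_C1 {t : G} (htt : t * t = 1) (r : G) (z : List G) :
    LEq (t :: t :: r :: z) ((r * t * r⁻¹) :: (r * t * r⁻¹) :: r :: z) :=
  (leq_P1 htt r z).trans (leq_P2 r t z)

/-- Hop: an adjacent equal pair of involutions hops left past a block unchanged. -/
theorem leq_hop {t : G} (htt : t * t = 1) :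
    ∀ (y z : List G), LEq (y ++ t :: t :: z) (t :: t :: (y ++ z)) := by
  intro y
  induction y with
  | nil => intro z; exact LEq.refl _
  | cons r y' ih =>
    intro z
    have h1 : LEq (r :: (y' ++ t :: t :: z)) (r :: t :: t :: (y' ++ z)) :=
      (ih z).cons r
    have h2 : LEq (t :: t :: r :: (y' ++ z)) (r :: t :: t :: (y' ++ z)) :=
      leq_P1 htt r (y' ++ z)
    simpa using h1.trans h2.symm

/-- J: an entry jumps to the front of a block, conjugated by the block's product. -/
theorem leq_jump : ∀ (y : List G) (t : G) (z : List G),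
    LEq (y ++ t :: z) ((y.prod * t * y.prod⁻¹) :: (y ++ z)) := by
  intro y
  induction y with
  | nil => intro t z; simpa using LEq.refl (t :: z)
  | cons r y' ih =>
    intro t z
    have h1 : LEq (r :: (y' ++ t :: z)) (r :: (y'.prod * t * y'.prod⁻¹) :: (y' ++ z)) :=
      (ih t z).cons r
    have h2 : LEq (r :: (y'.prod * t * y'.prod⁻¹) :: (y' ++ z))
        ((r * (y'.prod * t * y'.prod⁻¹) * r⁻¹) :: r :: (y' ++ z)) :=
      LEq.of_step (by simpa using LStep.mk [] r (y'.prod * t * y'.prod⁻¹) (y' ++ z))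
    have h3 : r * (y'.prod * t * y'.prod⁻¹) * r⁻¹
        = (r :: y').prod * t * ((r :: y').prod)⁻¹ := by
      simp [List.prod_cons, mul_assoc]
    rw [h3] at h2
    simpa using h1.trans h2

/-- In-place conjugation of a pair of involutions at the head by `r` sitting
somewhere in the list to its right. -/
theorem leq_conj_right {t : G} (htt : t * t = 1) (v₁ : List G) (r : G) (v₂ : List G) :
    LEq (t :: t :: (v₁ ++ r :: v₂)) ((r*t*r⁻¹) :: (r*t*r⁻¹) :: (v₁ ++ r :: v₂)) := by
  have h1 : LEq (v₁ ++ t :: t :: r :: v₂) (t :: t :: (v₁ ++ r :: v₂)) :=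
    leq_hop htt v₁ (r :: v₂)
  have h2 : LEq (v₁ ++ t :: t :: r :: v₂) (v₁ ++ (r*t*r⁻¹) :: (r*t*r⁻¹) :: r :: v₂) := by
    have := (leq_C1 htt r v₂).context v₁ []
    simpa using this
  have hs : (r*t*r⁻¹) * (r*t*r⁻¹) = 1 := by
    calc (r*t*r⁻¹) * (r*t*r⁻¹) = r * (t*t) * r⁻¹ := by group
    _ = 1 := by rw [htt]; group
  have h3 : LEq (v₁ ++ (r*t*r⁻¹) :: (r*t*r⁻¹) :: r :: v₂)
      ((r*t*r⁻¹) :: (r*t*r⁻¹) :: (v₁ ++ r :: v₂)) :=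
    leq_hop hs v₁ (r :: v₂)
  exact (h1.symm.trans h2).trans h3

/-- Lemma B: the head pair of involutions may be conjugated in place by any
element of the subgroup generated by the remaining entries. -/
theorem leq_conj_pair (u v : List G) {g : G}
    (hg : g ∈ Subgroup.closure ({x | x ∈ u} ∪ {x | x ∈ v})) :
    ∀ t : G, t * t = 1 → LEq (u ++ t :: t :: v) (u ++ (g*t*g⁻¹) :: (g*t*g⁻¹) :: v) := by
  induction hg using Subgroup.closure_induction with
  | mem r hr =>
    intro t htt
    rcases hr with hr | hr
    · -- r occurs in u
      obtain ⟨u₁, u₂, rfl⟩ := List.append_of_mem hr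
      -- u₁ ++ r :: u₂ ++ t :: t :: v  ~  u₁ ++ r :: t :: t :: (u₂ ++ v)
      have h1 : LEq ((u₁ ++ r :: u₂) ++ t :: t :: v)
          ((u₁ ++ [r]) ++ (t :: t :: (u₂ ++ v))) := by
        have := (leq_hop htt u₂ v).context (u₁ ++ [r]) []
        simpa [List.append_assoc] using this
      have hs : (r*t*r⁻¹) * (r*t*r⁻¹) = 1 := by
        calc (r*t*r⁻¹) * (r*t*r⁻¹) = r * (t*t) * r⁻¹ := by group
        _ = 1 := by rw [htt]; group
      -- r :: t :: t :: w ~ r :: s :: s :: w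
      have h2 : LEq (r :: t :: t :: (u₂ ++ v)) (r :: (r*t*r⁻¹) :: (r*t*r⁻¹) :: (u₂ ++ v)) := by
        have a1 : LEq (t :: t :: r :: (u₂ ++ v)) (r :: t :: t :: (u₂ ++ v)) :=
          leq_P1 htt r (u₂ ++ v)
        have a2 : LEq (t :: t :: r :: (u₂ ++ v))
            ((r*t*r⁻¹) :: (r*t*r⁻¹) :: r :: (u₂ ++ v)) := leq_C1 htt r (u₂ ++ v)
        have a3 : LEq ((r*t*r⁻¹) :: (r*t*r⁻¹) :: r :: (u₂ ++ v))
            (r :: (r*t*r⁻¹) :: (r*t*r⁻¹) :: (u₂ ++ v)) := leq_P1 hs r (u₂ ++ v)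
        exact (a1.symm.trans a2).trans a3
      have h2' : LEq ((u₁ ++ [r]) ++ (t :: t :: (u₂ ++ v)))
          ((u₁ ++ [r]) ++ ((r*t*r⁻¹) :: (r*t*r⁻¹) :: (u₂ ++ v))) := by
        have b1 : LEq (r :: (t :: t :: (u₂ ++ v))) (r :: ((r*t*r⁻¹) :: (r*t*r⁻¹) :: (u₂ ++ v))) := h2
        have := b1.context u₁ []
        simpa [List.append_assoc] using this
      have h3 : LEq ((u₁ ++ [r]) ++ ((r*t*r⁻¹) :: (r*t*r⁻¹) :: (u₂ ++ v)))
          ((u₁ ++ r :: u₂) ++ (r*t*r⁻¹) :: (r*t*r⁻¹) :: v) := by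
        have := ((leq_hop hs u₂ v).symm).context (u₁ ++ [r]) []
        simpa [List.append_assoc] using this
      exact (h1.trans h2').trans h3
    · -- r occurs in v
      obtain ⟨v₁, v₂, rfl⟩ := List.append_of_mem hr
      have h1 : LEq (u ++ t :: t :: (v₁ ++ r :: v₂))
          (u ++ (r*t*r⁻¹) :: (r*t*r⁻¹) :: (v₁ ++ r :: v₂)) := by
        have := (leq_conj_right htt v₁ r v₂).context u []
        simpa using this
      exact h1
  | one =>
    intro t htt
    simpa using LEq.refl (u ++ t :: t :: v)
  | mul x y hx hy ihx ihy =>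
    intro t htt
    have h1 := ihy t htt
    have hyy : (y*t*y⁻¹) * (y*t*y⁻¹) = 1 := by
      calc (y*t*y⁻¹) * (y*t*y⁻¹) = y * (t*t) * y⁻¹ := by group
      _ = 1 := by rw [htt]; group
    have h2 := ihx (y*t*y⁻¹) hyy
    have h3 : x * (y*t*y⁻¹) * x⁻¹ = (x*y)*t*(x*y)⁻¹ := by group
    rw [h3] at h2
    exact h1.trans h2
  | inv x hx ihx =>
    intro t htt
    have hs : (x⁻¹*t*x) * (x⁻¹*t*x) = 1 := by
      calc (x⁻¹*t*x) * (x⁻¹*t*x) = x⁻¹ * (t*t) * x := by group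
      _ = 1 := by rw [htt]; group
    have h2 := ihx (x⁻¹*t*x) hs
    have h3 : x * (x⁻¹*t*x) * x⁻¹ = t := by group
    rw [h3] at h2
    have h4 : x⁻¹*t*x = x⁻¹*t*x⁻¹⁻¹ := by group
    rw [h4] at h2
    exact h2.symm


open Equiv Equiv.Perm

variable {d : ℕ}

/-- The point of `Fin d` with value `k` (clipped). -/
def pt (hd : 2 ≤ d) (k : ℕ) : Fin d := ⟨min k (d-1), by omega⟩

theorem pt_val (hd : 2 ≤ d) {k : ℕ} (hk : k ≤ d - 1) : ((pt hd k : Fin d) : ℕ) = k := by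
  simp [pt]; omega

/-- The subgroup of permutations moving only points with value `< e`. -/
def subMoves (d e : ℕ) : Subgroup (Perm (Fin d)) where
  carrier := {g | ∀ p : Fin d, g p ≠ p → (p : ℕ) < e}
  one_mem' := by simp
  mul_mem' := by
    intro g h hg hh p hp
    rcases eq_or_ne (h p) p with h1 | h1
    · apply hg; rwa [Perm.mul_apply, h1] at hp
    · exact hh p h1
  inv_mem' := by
    intro g hg p hp
    apply hg
    intro hc
    apply hp
    conv_lhs => rw [← hc]
    simp

theorem fixes_of_subMoves {g : Perm (Fin d)} {e : ℕ} (hg : g ∈ subMoves d e)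
    {p : Fin d} (hp : ¬ ((p : ℕ) < e)) : g p = p := by
  by_contra hne
  exact hp (hg p hne)

theorem moves_lt_of_subMoves {g : Perm (Fin d)} {e : ℕ} (hg : g ∈ subMoves d e)
    {p : Fin d} (hp : g p ≠ p) : (p : ℕ) < e := hg p hp

/-- A closure of a set of permutations preserving a (finite) set of points preserves it. -/
theorem closure_maps {S : Set (Perm (Fin d))} {A : Set (Fin d)}
    (hA : ∀ s ∈ S, ∀ y ∈ A, s y ∈ A) :
    ∀ g ∈ Subgroup.closure S, ∀ y ∈ A, g y ∈ A := by
  have key : ∀ s ∈ S, ∀ y ∈ A, s⁻¹ y ∈ A := by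
    intro s hs
    have hmap : Set.MapsTo s A A := fun y hy => hA s hs y hy
    have hinj : Set.InjOn s A := fun a _ b _ hab => s.injective hab
    have hbij := (Set.Finite.injOn_iff_bijOn_of_mapsTo (Set.toFinite A) hmap).mp hinj
    intro y hy
    obtain ⟨x, hx, hxy⟩ := hbij.surjOn hy
    have : s⁻¹ y = x := by rw [← hxy]; simp
    rwa [this]
  intro g hg
  induction hg using Subgroup.closure_induction with
  | mem r hr => exact hA r hr
  | one => simp only [Perm.one_apply]; exact fun y hy => hy
  | mul x y hx hy ihx ihy =>
    intro p hp
    have := ihx (y p) (ihy p hp)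
    simpa using this
  | inv x hx ihx =>
    intro p hp
    -- x maps A to A bijectively since A is finite
    have hmap : Set.MapsTo x A A := fun q hq => ihx q hq
    have hinj : Set.InjOn x A := fun a _ b _ hab => x.injective hab
    have hbij := (Set.Finite.injOn_iff_bijOn_of_mapsTo (Set.toFinite A) hmap).mp hinj
    obtain ⟨q, hq, hqp⟩ := hbij.surjOn hp
    have : x⁻¹ p = q := by rw [← hqp]; simp
    rwa [this]

theorem closure_fixes {S : Set (Perm (Fin d))} {p : Fin d}
    (hS : ∀ s ∈ S, s p = p) : ∀ g ∈ Subgroup.closure S, g p = p := by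
  intro g hg
  have : g ∈ MulAction.stabilizer (Perm (Fin d)) p := by
    have hle : Subgroup.closure S ≤ MulAction.stabilizer (Perm (Fin d)) p := by
      rw [Subgroup.closure_le]
      intro s hs
      simpa [MulAction.mem_stabilizer_iff, Perm.smul_def] using hS s hs
    exact hle hg
  simpa [MulAction.mem_stabilizer_iff, Perm.smul_def] using this

theorem closure_subMoves {S : Set (Perm (Fin d))} {e : ℕ}
    (hS : ∀ s ∈ S, s ∈ subMoves d e) : ∀ g ∈ Subgroup.closure S, g ∈ subMoves d e := by
  intro g hg
  exact (Subgroup.closure_le _ |>.mpr hS) hg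

/-- Normal form: a transposition moving `top` is `swap (t top) top`. -/
theorem swap_mover {t : Perm (Fin d)} (hsw : t.IsSwap) {top : Fin d} (hm : t top ≠ top) :
    t = Equiv.swap (t top) top := by
  obtain ⟨x, y, hxy, rfl⟩ := hsw
  rcases (Equiv.swap_apply_ne_self_iff.mp hm).2 with rfl | rfl
  · rw [Equiv.swap_apply_left, Equiv.swap_comm]
  · rw [Equiv.swap_apply_right]

theorem isSwap_inv_eq {t : Perm (Fin d)} (hsw : t.IsSwap) : t⁻¹ = t := by
  obtain ⟨x, y, hxy, rfl⟩ := hsw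
  exact Equiv.swap_inv x y

theorem isSwap_mul_self {t : Perm (Fin d)} (hsw : t.IsSwap) : t * t = 1 := by
  obtain ⟨x, y, hxy, rfl⟩ := hsw
  exact Equiv.swap_mul_self x y

theorem prod_fixes {top : Fin d} :
    ∀ {w : List (Perm (Fin d))}, (∀ x ∈ w, x top = top) → w.prod top = top := by
  intro w
  induction w with
  | nil => intro _; simp
  | cons a w ih =>
    intro h
    rw [List.prod_cons, Perm.mul_apply, ih (fun x hx => h x (List.mem_cons_of_mem a hx)),
      h a (List.mem_cons_self)]


theorem exists_first {α : Type*} (P : α → Prop) [DecidablePred P] :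
    ∀ l : List α, (∃ x ∈ l, P x) → ∃ y t z, l = y ++ t :: z ∧ P t ∧ ∀ x ∈ y, ¬ P x := by
  intro l
  induction l with
  | nil => rintro ⟨x, hx, _⟩; simp at hx
  | cons a l ih =>
    intro hex
    by_cases ha : P a
    · exact ⟨[], a, l, by simp, ha, by simp⟩
    · have hex' : ∃ x ∈ l, P x := by
        obtain ⟨x, hx, hPx⟩ := hex
        rcases List.mem_cons.mp hx with rfl | hx'
        · exact absurd hPx ha
        · exact ⟨x, hx', hPx⟩
      obtain ⟨y, t, z, rfl, hPt, hy⟩ := ih hex'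
      refine ⟨a :: y, t, z, by simp, hPt, ?_⟩
      intro x hx
      rcases List.mem_cons.mp hx with rfl | hx'
      · exact ha
      · exact hy x hx'

theorem adj_or_const {α : Type*} :
    ∀ s : List α, (∃ (u : List α) (a : α) (b : α) (v : List α), s = u ++ a :: b :: v ∧ a ≠ b) ∨
      (∀ x ∈ s, ∀ y ∈ s, x = y) := by
  intro s
  induction s with
  | nil => right; simp
  | cons a s ih =>
    match s, ih with
    | [], _ => right; simp
    | b :: s', ih =>
      by_cases hab : a = b
      · rcases ih with ⟨u, x, y, v, heq, hxy⟩ | hconst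
        · left; exact ⟨a :: u, x, y, v, by simp [heq], hxy⟩
        · right
          intro x hx y hy
          subst hab
          rcases List.mem_cons.mp hx with rfl | hx' <;>
            rcases List.mem_cons.mp hy with rfl | hy'
          · rfl
          · exact (hconst y hy' x (List.mem_cons_self)).symm
          · exact hconst x hx' y (List.mem_cons_self)
          · exact hconst x hx' y hy'
      · left; exact ⟨[], a, b, s', by simp, hab⟩

theorem conj_mover {p x : Perm (Fin d)} {top : Fin d} (hp : p top = top)
    (hx : x top ≠ top) : (p * x * p⁻¹ : Perm (Fin d)) top ≠ top := by
  have hpi : p⁻¹ top = top := by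
    conv_lhs => rw [← hp]
    simp
  simp only [Perm.mul_apply, hpi]
  intro hc
  apply hx
  have h2 : p⁻¹ (p (x top)) = p⁻¹ top := by rw [hc]
  simpa [hpi] using h2

/-- Gather all entries moving `top` to the front. -/
theorem gather (top : Fin d) : ∀ (n : ℕ) (l : List (Perm (Fin d))), l.length = n →
    ∃ s w, LEq l (s ++ w) ∧ (∀ x ∈ s, x top ≠ top) ∧ (∀ x ∈ w, x top = top) ∧
      s.length = l.countP (fun x => decide (x top ≠ top)) := by
  intro n
  induction n using Nat.strong_induction_on with
  | _ n ih =>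
    intro l hlen
    by_cases hall : ∀ x ∈ l, x top = top
    · refine ⟨[], l, by simpa using LEq.refl l, by simp, hall, ?_⟩
      simp only [List.length_nil]
      symm
      rw [List.countP_eq_zero]
      intro a ha
      simpa using hall a ha
    · push_neg at hall
      obtain ⟨y, t, z, rfl, hPt, hy⟩ := exists_first (fun x : Perm (Fin d) => x top ≠ top) _ hall
      set p := y.prod with hp
      have hptop : p top = top := prod_fixes (fun x hx => not_not.mp (hy x hx))
      have hjump := leq_jump y t z
      have hmov : (p * t * p⁻¹) top ≠ top := conj_mover hptop hPt
      have hlz : (y ++ z).length < n := by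
        simp only [List.length_append, List.length_cons] at hlen ⊢
        omega
      obtain ⟨s', w', hle', hs', hw', hcnt'⟩ := ih _ hlz (y ++ z) rfl
      refine ⟨(p * t * p⁻¹) :: s', w', ?_, ?_, hw', ?_⟩
      · exact hjump.trans (hle'.cons _)
      · intro x hx
        rcases List.mem_cons.mp hx with rfl | hx'
        · exact hmov
        · exact hs' x hx'
      · have h1 : (y ++ z).countP (fun x => decide (x top ≠ top))
            = z.countP (fun x => decide (x top ≠ top)) := by
          rw [List.countP_append]
          have : y.countP (fun x => decide (x top ≠ top)) = 0 := by
            rw [List.countP_eq_zero]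
            intro a ha
            have h0 := not_not.mp (hy a ha)
            simp [h0]
          omega
        have h2 : (y ++ t :: z).countP (fun x => decide (x top ≠ top))
            = z.countP (fun x => decide (x top ≠ top)) + 1 := by
          rw [List.countP_append, List.countP_cons]
          have : y.countP (fun x => decide (x top ≠ top)) = 0 := by
            rw [List.countP_eq_zero]
            intro a ha
            have h0 := not_not.mp (hy a ha)
            simp [h0]
          rw [this]
          simp [hPt]
        simp only [List.length_cons, hcnt', h1, h2]


theorem isSwap_conj {g x : Perm (Fin d)} (hx : x.IsSwap) : (g * x * g⁻¹).IsSwap := by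
  obtain ⟨a, b, hab, rfl⟩ := hx
  exact ⟨g a, g b, fun h => hab (g.injective h), (Equiv.swap_apply_apply g a b).symm⟩

/-- The invariant predicate: swap supported on the first `e` points. -/
def GoodSwap (d e : ℕ) (x : Perm (Fin d)) : Prop := x.IsSwap ∧ x ∈ subMoves d e

theorem goodSwap_conj (e : ℕ) : ∀ g x : Perm (Fin d),
    GoodSwap d e g → GoodSwap d e x → GoodSwap d e (g * x * g⁻¹) := by
  intro g x hg hx
  exact ⟨isSwap_conj hx.1, mul_mem (mul_mem hg.2 hx.2) (inv_mem hg.2)⟩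

theorem goodSwap_conj_inv (e : ℕ) : ∀ g x : Perm (Fin d),
    GoodSwap d e g → GoodSwap d e x → GoodSwap d e (g⁻¹ * x * g) := by
  intro g x hg hx
  refine ⟨?_, mul_mem (mul_mem (inv_mem hg.2) hx.2) hg.2⟩
  have := isSwap_conj (g := g⁻¹) hx.1
  simpa using this

/-- Transitivity of the subgroup generated by a list on the first `e` points. -/
def TransOn (e : ℕ) (l : List (Perm (Fin d))) : Prop :=
  ∀ a b : Fin d, (a : ℕ) < e → (b : ℕ) < e →
    ∃ g ∈ Subgroup.closure {x | x ∈ l}, g a = b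

theorem LEq.transfer {e : ℕ} {l l' : List (Perm (Fin d))} (hLE : LEq l l')
    (hgood : ∀ x ∈ l, GoodSwap d e x) (hprod : l.prod = 1) (htr : TransOn e l) :
    (∀ x ∈ l', GoodSwap d e x) ∧ l'.prod = 1 ∧ TransOn e l' := by
  refine ⟨(hLE.forall_mem (goodSwap_conj e) (goodSwap_conj_inv e)).mp hgood,
    hLE.prod ▸ hprod, ?_⟩
  intro a b ha hb
  obtain ⟨g, hg, hab⟩ := htr a b ha hb
  exact ⟨g, hLE.closure ▸ hg, hab⟩

theorem countP_of_movers {top : Fin d} {s : List (Perm (Fin d))}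
    (h : ∀ x ∈ s, x top ≠ top) :
    s.countP (fun x => decide (x top ≠ top)) = s.length :=
  List.countP_eq_length.mpr (fun a ha => by simpa using h a ha)

theorem countP_of_fixers {top : Fin d} {s : List (Perm (Fin d))}
    (h : ∀ x ∈ s, x top = top) :
    s.countP (fun x => decide (x top ≠ top)) = 0 :=
  List.countP_eq_zero.mpr (fun a ha => by simpa using h a ha)


theorem orbit_lt {e : ℕ} {W : Set (Perm (Fin d))} (hW : ∀ r ∈ W, r ∈ subMoves d (e-1))
    {a y : Fin d} (hav : (a : ℕ) < e - 1) (hy : ∃ g ∈ Subgroup.closure W, g a = y) :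
    (y : ℕ) < e - 1 := by
  obtain ⟨g, hg, rfl⟩ := hy
  rcases eq_or_ne (g a) a with h | h
  · rwa [h]
  · have hgs : g ∈ subMoves d (e-1) := closure_subMoves hW g hg
    have hgi : g⁻¹ ∈ subMoves d (e-1) := inv_mem hgs
    apply moves_lt_of_subMoves hgi
    intro hc
    apply h
    have := congrArg g hc
    simpa using this.symm

theorem orbit_lemma {e : ℕ} {t : Perm (Fin d)} {W : Set (Perm (Fin d))} {top x a : Fin d}
    (htopv : (top : ℕ) = e - 1) (hxv : (x : ℕ) < e - 1) (hav : (a : ℕ) < e - 1)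
    (ht : t = Equiv.swap x top) (hW : ∀ r ∈ W, r ∈ subMoves d (e - 1)) :
    ∀ h ∈ Subgroup.closure (insert t W), ∀ p : Fin d,
      p ∈ ({y : Fin d | ∃ g ∈ Subgroup.closure W, g a = y} ∪
        {y : Fin d | y = top ∧ ∃ g ∈ Subgroup.closure W, g a = x}) →
      h p ∈ ({y : Fin d | ∃ g ∈ Subgroup.closure W, g a = y} ∪
        {y : Fin d | y = top ∧ ∃ g ∈ Subgroup.closure W, g a = x}) := by
  apply closure_maps
  intro s hs y hy
  rcases Set.mem_insert_iff.mp hs with rfl | hsW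
  · -- s = t
    rcases hy with hyO | ⟨rfl, hxO⟩
    · by_cases hyx : y = x
      · subst hyx
        right
        refine ⟨?_, hyO⟩
        rw [ht, Equiv.swap_apply_left]
      · have hylt : (y : ℕ) < e - 1 := orbit_lt hW hav hyO
        have hytop : y ≠ top := by
          intro hc; rw [hc, htopv] at hylt; omega
        left
        rwa [ht, Equiv.swap_apply_of_ne_of_ne hyx hytop]
    · left
      rw [ht, Equiv.swap_apply_right]
      exact hxO
  · rcases hy with hyO | ⟨rfl, hxO⟩
    · obtain ⟨g, hg, rfl⟩ := hyO
      left
      exact ⟨s * g, mul_mem (Subgroup.subset_closure hsW) hg, by simp⟩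
    · right
      refine ⟨?_, hxO⟩
      apply fixes_of_subMoves (hW s hsW)
      omega


theorem merge_fixes {top : Fin d} {a b : Perm (Fin d)} (ha : a.IsSwap) (hb : b.IsSwap)
    (hma : a top ≠ top) (hmb : b top ≠ top) (hab : a ≠ b) :
    (a * b * a⁻¹ : Perm (Fin d)) top = top := by
  have hxab : a top ≠ b top := by
    intro hc
    apply hab
    rw [swap_mover ha hma, swap_mover hb hmb, hc]
  have hbx : b (a top) = a top := by
    conv_lhs => rw [swap_mover hb hmb]
    exact Equiv.swap_apply_of_ne_of_ne hxab hma
  have haa : a (a top) = top := by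
    have h1 := isSwap_mul_self ha
    calc a (a top) = (a * a) top := rfl
    _ = top := by rw [h1]; rfl
  calc (a * b * a⁻¹) top = a (b (a⁻¹ top)) := rfl
  _ = a (b (a top)) := by rw [isSwap_inv_eq ha]
  _ = top := by rw [hbx, haa]

theorem countP_shape {top : Fin d} {u v w : List (Perm (Fin d))} {f a : Perm (Fin d)}
    (hu : ∀ x ∈ u, x top ≠ top) (hv : ∀ x ∈ v, x top ≠ top) (hw : ∀ x ∈ w, x top = top)
    (hf : f top = top) (ha : a top ≠ top) :
    (u ++ f :: a :: (v ++ w)).countP (fun x => decide (x top ≠ top))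
      = u.length + v.length + 1 := by
  rw [List.countP_append, List.countP_cons, List.countP_cons, List.countP_append,
    countP_of_movers hu, countP_of_movers hv, countP_of_fixers hw]
  simp [hf, ha]
  omega

theorem lemA (hd : 2 ≤ d) {e : ℕ} (he : 3 ≤ e) (hed : e ≤ d) :
    ∀ m : ℕ, ∀ l : List (Perm (Fin d)),
      l.countP (fun x => decide (x (pt hd (e-1)) ≠ pt hd (e-1))) = m → 1 ≤ m →
      (∀ x ∈ l, GoodSwap d e x) → l.prod = 1 → TransOn e l →
      ∃ t rest, LEq l (t :: t :: rest) ∧ t (pt hd (e-1)) ≠ pt hd (e-1) ∧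
        ∀ x ∈ rest, x (pt hd (e-1)) = pt hd (e-1) := by
  have htopv : ((pt hd (e-1) : Fin d) : ℕ) = e - 1 := pt_val hd (by omega)
  set top := pt hd (e-1) with htop
  intro m
  induction m using Nat.strong_induction_on with
  | _ m ih =>
    intro l hcount hm hgood hprod htrans
    obtain ⟨s, w, hlsw, hs, hw, hslen⟩ := gather top l.length l rfl
    obtain ⟨hgood2, hprod2, htr2⟩ := hlsw.transfer hgood hprod htrans
    rw [hcount] at hslen
    have hwgood : ∀ r ∈ w, GoodSwap d e r := fun r hr =>
      hgood2 r (List.mem_append_right _ hr)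
    have hsgood : ∀ a ∈ s, GoodSwap d e a := fun a ha =>
      hgood2 a (List.mem_append_left _ ha)
    have hxlt : ∀ a ∈ s, ((a top : Fin d) : ℕ) < e - 1 := by
      intro a ha
      have hga : GoodSwap d e a := hsgood a ha
      have hma : a top ≠ top := hs a ha
      have h1 : a (a top) = top := by
        have h2 := isSwap_mul_self hga.1
        calc a (a top) = (a * a) top := rfl
        _ = top := by rw [h2]; rfl
      have hmove : a (a top) ≠ a top := by rw [h1]; exact fun hc => hma hc.symm
      have hlt : ((a top : Fin d) : ℕ) < e := moves_lt_of_subMoves hga.2 hmove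
      have hne2 : ((a top : Fin d) : ℕ) ≠ e - 1 := by
        intro hc
        apply hma
        apply Fin.ext
        rw [hc, htopv]
      omega
    have hWsub : ∀ r ∈ w, r ∈ subMoves d (e-1) := by
      intro r hr p hp
      have h1 : (p : ℕ) < e := moves_lt_of_subMoves (hwgood r hr).2 hp
      have h2 : p ≠ top := by
        intro hc
        rw [hc] at hp
        exact hp (hw r hr)
      have h3 : (p : ℕ) ≠ e - 1 := fun hc => h2 (Fin.ext (by rw [hc, htopv]))
      omega
    rcases s with _ | ⟨t₁, s₁⟩
    · exfalso; simp only [List.length_nil] at hslen; omega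
    have ht₁m : t₁ top ≠ top := hs t₁ (List.mem_cons_self)
    have ht₁g : GoodSwap d e t₁ := hsgood t₁ (List.mem_cons_self)
    rcases s₁ with _ | ⟨t₂, s₂⟩
    · -- singleton: impossible since the product fixes top
      exfalso
      have hpr : ([t₁] ++ w).prod = 1 := hprod2
      rw [List.singleton_append, List.prod_cons] at hpr
      have h1 : (t₁ * w.prod) top = top := by rw [hpr]; rfl
      rw [Perm.mul_apply, prod_fixes hw] at h1
      exact ht₁m h1
    have ht₂m : t₂ top ≠ top := hs t₂ (by simp)
    have ht₂g : GoodSwap d e t₂ := hsgood t₂ (by simp)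
    have hmlen : s₂.length + 2 = m := by
      simp only [List.length_cons] at hslen
      omega
    rcases List.eq_nil_or_concat s₂ with rfl | hs₂ne
    · -- exactly two movers: they must be equal
      have hpr : ([t₁, t₂] ++ w).prod = 1 := hprod2
      rw [List.cons_append, List.cons_append, List.nil_append, List.prod_cons,
        List.prod_cons] at hpr
      have h1 : (t₁ * (t₂ * w.prod)) top = top := by rw [hpr]; rfl
      rw [Perm.mul_apply, Perm.mul_apply, prod_fixes hw] at h1
      have ht₂x : t₂ top = t₁ top := by
        by_contra hne
        have h2 : t₁ (t₂ top) = t₂ top := by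
          conv_lhs => rw [swap_mover ht₁g.1 ht₁m]
          exact Equiv.swap_apply_of_ne_of_ne hne ht₂m
        rw [h2] at h1
        exact ht₂m h1
      have ht₁₂ : t₂ = t₁ := by
        rw [swap_mover ht₂g.1 ht₂m, swap_mover ht₁g.1 ht₁m, ht₂x]
      refine ⟨t₁, w, ?_, ht₁m, hw⟩
      have heq : (t₁ :: t₂ :: []) ++ w = t₁ :: t₁ :: w := by rw [ht₁₂]; rfl
      rwa [heq] at hlsw
    · have hs₂len : 1 ≤ s₂.length := by
        obtain ⟨s₂', t₃, rfl⟩ := hs₂ne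
        simp
      clear hs₂ne
      have hm3 : 3 ≤ m := by omega
      rcases adj_or_const (t₁ :: t₂ :: s₂) with ⟨u, a, b, v, hdec, hab⟩ | hconst
      · -- two adjacent distinct movers: merge them
        have hamem : a ∈ t₁ :: t₂ :: s₂ := by rw [hdec]; simp
        have hbmem : b ∈ t₁ :: t₂ :: s₂ := by rw [hdec]; simp
        have ham : a top ≠ top := hs a hamem
        have hbm : b top ≠ top := hs b hbmem
        have hag : GoodSwap d e a := hsgood a hamem
        have hbg : GoodSwap d e b := hsgood b hbmem
        have hf : (a * b * a⁻¹ : Perm (Fin d)) top = top :=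
          merge_fixes hag.1 hbg.1 ham hbm hab
        have heq1 : (t₁ :: t₂ :: s₂) ++ w = u ++ a :: b :: (v ++ w) := by
          rw [hdec]; simp
        have hstep : LEq ((t₁ :: t₂ :: s₂) ++ w)
            (u ++ (a*b*a⁻¹) :: a :: (v ++ w)) := by
          rw [heq1]
          exact LEq.of_step (LStep.mk u a b (v ++ w))
        have hLE2 : LEq l (u ++ (a*b*a⁻¹) :: a :: (v ++ w)) := hlsw.trans hstep
        have humem : ∀ x ∈ u, x ∈ t₁ :: t₂ :: s₂ := by
          intro x hx; rw [hdec]; simp [hx]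
        have hvmem : ∀ x ∈ v, x ∈ t₁ :: t₂ :: s₂ := by
          intro x hx; rw [hdec]; simp [hx]
        have hulen : u.length + v.length + 2 = m := by
          have h4 := congrArg List.length hdec
          simp only [List.length_cons, List.length_append] at h4
          omega
        have hcnt2 : (u ++ (a*b*a⁻¹) :: a :: (v ++ w)).countP
            (fun x => decide (x top ≠ top)) = m - 1 := by
          rw [countP_shape (fun x hx => hs x (humem x hx))
            (fun x hx => hs x (hvmem x hx)) hw hf ham]
          omega
        obtain ⟨t, rest, hA, hAm, hAr⟩ := ih (m-1) (by omega) _ hcnt2 (by omega)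
          ((hLE2.transfer hgood hprod htrans).1)
          ((hLE2.transfer hgood hprod htrans).2.1)
          ((hLE2.transfer hgood hprod htrans).2.2)
        exact ⟨t, rest, hLE2.trans hA, hAm, hAr⟩
      · -- all movers equal: conjugate the pair to create a distinct adjacent mover
        have hallt : ∀ x ∈ t₁ :: t₂ :: s₂, x = t₁ :=
          fun x hx => hconst x hx t₁ (List.mem_cons_self)
        set n₂ := s₂.length with hn₂
        have hsrep : t₁ :: t₂ :: s₂ = List.replicate (n₂ + 2) t₁ := by
          apply List.eq_replicate_iff.mpr
          exact ⟨by simp [hn₂], hallt⟩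
        set x := t₁ top with hxdef
        have hxv : (x : ℕ) < e - 1 := hxlt t₁ (List.mem_cons_self)
        have ht₁swap : t₁ = Equiv.swap x top := swap_mover ht₁g.1 ht₁m
        obtain ⟨z, hzv, hzx, hztop⟩ : ∃ z : Fin d, (z : ℕ) < e - 1 ∧ z ≠ x ∧ z ≠ top := by
          by_cases h0 : (x : ℕ) = 0
          · refine ⟨pt hd 1, ?_, ?_, ?_⟩
            · rw [pt_val hd (by omega)]; omega
            · intro hc
              have := congrArg (fun q : Fin d => (q : ℕ)) hc
              simp only [pt_val hd (show 1 ≤ d - 1 by omega)] at this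
              omega
            · intro hc
              have := congrArg (fun q : Fin d => (q : ℕ)) hc
              simp only [pt_val hd (show 1 ≤ d - 1 by omega), htopv] at this
              omega
          · refine ⟨pt hd 0, ?_, ?_, ?_⟩
            · rw [pt_val hd (by omega)]; omega
            · intro hc
              have := congrArg (fun q : Fin d => (q : ℕ)) hc
              simp only [pt_val hd (show 0 ≤ d - 1 by omega)] at this
              omega
            · intro hc
              have := congrArg (fun q : Fin d => (q : ℕ)) hc
              simp only [pt_val hd (show 0 ≤ d - 1 by omega), htopv] at this
              omega
        obtain ⟨h, hhmem, hhz⟩ := htr2 top z (by omega) (by omega)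
        have hsubins : {y : Perm (Fin d) | y ∈ (t₁ :: t₂ :: s₂) ++ w}
            ⊆ insert t₁ {r | r ∈ w} := by
          intro y hy
          simp only [Set.mem_setOf_eq, List.mem_append] at hy
          rcases hy with hy | hy
          · left; exact hallt y hy
          · right; exact hy
        have hhmem2 : h ∈ Subgroup.closure (insert t₁ {r : Perm (Fin d) | r ∈ w}) :=
          Subgroup.closure_mono hsubins hhmem
        have htopA : top ∈ ({y : Fin d | ∃ g ∈ Subgroup.closure {r : Perm (Fin d) | r ∈ w}, g x = y} ∪
            {y : Fin d | y = top ∧ ∃ g ∈ Subgroup.closure {r : Perm (Fin d) | r ∈ w}, g x = x}) := by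
          right
          exact ⟨rfl, 1, one_mem _, by simp⟩
        have hzA := orbit_lemma htopv hxv hxv ht₁swap hWsub h hhmem2 top htopA
        rw [hhz] at hzA
        obtain ⟨g, hgmem, hgx⟩ : ∃ g ∈ Subgroup.closure {r : Perm (Fin d) | r ∈ w}, g x = z := by
          rcases hzA with hzO | ⟨hc, _⟩
          · exact hzO
          · exact absurd hc hztop
        have hgtop : g top = top := closure_fixes hw g hgmem
        have hpairdec : (t₁ :: t₂ :: s₂) ++ w
            = List.replicate n₂ t₁ ++ t₁ :: t₁ :: w := by
          rw [hsrep, List.replicate_add]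
          simp
        set T := g * t₁ * g⁻¹ with hTdef
        have hconj : LEq (List.replicate n₂ t₁ ++ t₁ :: t₁ :: w)
            (List.replicate n₂ t₁ ++ T :: T :: w) := by
          apply leq_conj_pair
          · exact Subgroup.closure_mono (Set.subset_union_right) hgmem
          · exact isSwap_mul_self ht₁g.1
        have hTswapeq : T = Equiv.swap z top := by
          rw [hTdef, ht₁swap, ← Equiv.swap_apply_apply, hgx, hgtop]
        have hTm : T top = z := by rw [hTswapeq, Equiv.swap_apply_right]
        have hTmover : T top ≠ top := by rw [hTm]; exact hztop
        have hTne : t₁ ≠ T := by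
          intro hc
          apply hzx
          rw [← hTm, ← hc]
        have hTswap : T.IsSwap := ⟨z, top, hztop, hTswapeq⟩
        have heq3 : List.replicate n₂ t₁ ++ T :: T :: w
            = List.replicate (n₂-1) t₁ ++ t₁ :: T :: (T :: w) := by
          have : List.replicate n₂ t₁ = List.replicate (n₂-1) t₁ ++ [t₁] := by
            rw [← List.replicate_succ']
            congr 1
            omega
          rw [this]
          simp
        have hstep : LEq (List.replicate n₂ t₁ ++ T :: T :: w)
            (List.replicate (n₂-1) t₁ ++ (t₁*T*t₁⁻¹) :: t₁ :: ([T] ++ w)) := by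
          rw [heq3]
          exact LEq.of_step (LStep.mk (List.replicate (n₂-1) t₁) t₁ T (T :: w))
        have hLE2 : LEq l (List.replicate (n₂-1) t₁ ++ (t₁*T*t₁⁻¹) :: t₁ :: ([T] ++ w)) := by
          refine hlsw.trans ?_
          rw [hpairdec]
          exact hconj.trans hstep
        have hf : (t₁*T*t₁⁻¹ : Perm (Fin d)) top = top :=
          merge_fixes ht₁g.1 hTswap ht₁m hTmover hTne
        have hcnt2 : (List.replicate (n₂-1) t₁ ++ (t₁*T*t₁⁻¹) :: t₁ :: ([T] ++ w)).countP
            (fun x => decide (x top ≠ top)) = m - 1 := by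
          rw [countP_shape (u := List.replicate (n₂-1) t₁) (v := [T])
            (fun x hx => by rw [List.eq_of_mem_replicate hx]; exact ht₁m)
            (fun x hx => by rw [List.eq_of_mem_singleton hx]; exact hTmover)
            hw hf ht₁m]
          simp only [List.length_replicate, List.length_singleton]
          omega
        obtain ⟨t, rest, hA, hAm, hAr⟩ := ih (m-1) (by omega) _ hcnt2 (by omega)
          ((hLE2.transfer hgood hprod htrans).1)
          ((hLE2.transfer hgood hprod htrans).2.1)
          ((hLE2.transfer hgood hprod htrans).2.2)
        exact ⟨t, rest, hLE2.trans hA, hAm, hAr⟩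


/-- The standard list of transpositions. -/
def stdL (hd : 2 ≤ d) (e m : ℕ) : List (Perm (Fin d)) :=
  List.ofFn (fun i : Fin m =>
    if (i : ℕ) + 4 ≤ 2 * e then
      Equiv.swap (pt hd (e - 2 - (i : ℕ)/2)) (pt hd (e - 1 - (i : ℕ)/2))
    else Equiv.swap (pt hd 0) (pt hd 1))

theorem stdL_two (hd : 2 ≤ d) (m : ℕ) :
    stdL hd 2 m = List.replicate m (Equiv.swap (pt hd 0) (pt hd 1)) := by
  apply List.eq_replicate_iff.mpr
  constructor
  · simp [stdL]
  · intro b hb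
    rw [stdL, List.mem_ofFn] at hb
    obtain ⟨i, rfl⟩ := hb
    show (if (i : ℕ) + 4 ≤ 2 * 2 then
        Equiv.swap (pt hd (2 - 2 - (i : ℕ)/2)) (pt hd (2 - 1 - (i : ℕ)/2))
      else Equiv.swap (pt hd 0) (pt hd 1)) = Equiv.swap (pt hd 0) (pt hd 1)
    split
    · next hcond =>
      have hi : (i : ℕ) = 0 := by omega
      rw [hi]
    · rfl

theorem stdL_cons (hd : 2 ≤ d) {e : ℕ} (he : 3 ≤ e) (m : ℕ) :
    stdL hd e (m + 2) = Equiv.swap (pt hd (e-2)) (pt hd (e-1)) ::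
      Equiv.swap (pt hd (e-2)) (pt hd (e-1)) :: stdL hd (e-1) m := by
  rw [stdL, stdL]
  rw [show m + 2 = (m + 1) + 1 by rfl, List.ofFn_succ, List.ofFn_succ]
  congr 1
  · simp only [Fin.val_zero]
    simp only [show (0:ℕ) + 4 ≤ 2 * e by omega, ↓reduceIte]
    norm_num
  congr 1
  · simp only [Fin.val_succ, Fin.val_zero]
    simp only [show (0:ℕ) + 1 + 4 ≤ 2 * e by omega, ↓reduceIte]
    norm_num
  · apply congrArg
    funext i
    simp only [Fin.val_succ]
    have hdiv : ((i : ℕ) + 1 + 1) / 2 = (i : ℕ)/2 + 1 := by omega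
    have hcond : ((i : ℕ) + 1 + 1 + 4 ≤ 2 * e) ↔ ((i : ℕ) + 4 ≤ 2 * (e - 1)) := by omega
    by_cases hc : (i : ℕ) + 4 ≤ 2 * (e - 1)
    · rw [if_pos (by omega), if_pos hc, hdiv]
      congr 2 <;> omega
    · rw [if_neg (by omega), if_neg hc]

theorem mover_val_lt {e : ℕ} {t : Perm (Fin d)} (hg : GoodSwap d e t) {top : Fin d}
    (htopv : (top : ℕ) = e - 1) (hm : t top ≠ top) : ((t top : Fin d) : ℕ) < e - 1 := by
  have h1 : t (t top) = top := by
    have h2 := isSwap_mul_self hg.1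
    calc t (t top) = (t * t) top := rfl
    _ = top := by rw [h2]; rfl
  have hmove : t (t top) ≠ t top := by rw [h1]; exact fun hc => hm hc.symm
  have hlt : ((t top : Fin d) : ℕ) < e := moves_lt_of_subMoves hg.2 hmove
  have hne2 : ((t top : Fin d) : ℕ) ≠ e - 1 := by
    intro hc
    exact hm (Fin.ext (by rw [hc, htopv]))
  omega

theorem goodSwap_two (hd : 2 ≤ d) {x : Perm (Fin d)} (hx : GoodSwap d 2 x) :
    x = Equiv.swap (pt hd 0) (pt hd 1) := by
  obtain ⟨⟨a, b, hab, rfl⟩, hsub⟩ := hx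
  have hav : (a : ℕ) < 2 := by
    apply moves_lt_of_subMoves hsub
    rw [Equiv.swap_apply_left]
    exact fun hc => hab hc.symm
  have hbv : (b : ℕ) < 2 := by
    apply moves_lt_of_subMoves hsub
    rw [Equiv.swap_apply_right]
    exact hab
  have hvne : (a : ℕ) ≠ (b : ℕ) := fun hc => hab (Fin.ext hc)
  have hpt0 : ((pt hd 0 : Fin d) : ℕ) = 0 := pt_val hd (by omega)
  have hpt1 : ((pt hd 1 : Fin d) : ℕ) = 1 := pt_val hd (by omega)
  rcases (by omega : (a : ℕ) = 0 ∨ (a : ℕ) = 1) with h0 | h1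
  · have hb1 : (b : ℕ) = 1 := by omega
    rw [show a = pt hd 0 from Fin.ext (by rw [h0, hpt0]),
      show b = pt hd 1 from Fin.ext (by rw [hb1, hpt1])]
  · have hb0 : (b : ℕ) = 0 := by omega
    rw [show a = pt hd 1 from Fin.ext (by rw [h1, hpt1]),
      show b = pt hd 0 from Fin.ext (by rw [hb0, hpt0]), Equiv.swap_comm]

theorem thmT (hd : 2 ≤ d) : ∀ e : ℕ, 2 ≤ e → e ≤ d →
    ∀ l : List (Perm (Fin d)), (∀ x ∈ l, GoodSwap d e x) → l.prod = 1 → TransOn e l →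
    LEq l (stdL hd e l.length) := by
  intro e
  induction e using Nat.strong_induction_on with
  | _ e ihe =>
    intro he2 hed l hgood hprod htrans
    by_cases he3 : 3 ≤ e
    · -- inductive step
      have htopv : ((pt hd (e-1) : Fin d) : ℕ) = e - 1 := pt_val hd (by omega)
      set top := pt hd (e-1) with htop
      -- some entry moves top
      have hmov : ∃ x ∈ l, x top ≠ top := by
        by_contra hno
        push_neg at hno
        obtain ⟨g, hgmem, hg0⟩ := htrans (pt hd 0) top
          (by rw [pt_val hd (by omega)]; omega) (by rw [htopv]; omega)
        have hgtop : g top = top := closure_fixes hno g hgmem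
        have : pt hd 0 = top := g.injective (by rw [hg0, hgtop])
        have hv := congrArg (fun q : Fin d => (q : ℕ)) this
        simp only [pt_val hd (show 0 ≤ d - 1 by omega), htopv] at hv
        omega
      have hcpos : 1 ≤ l.countP (fun x => decide (x top ≠ top)) := by
        rw [Nat.one_le_iff_ne_zero]
        intro hc
        obtain ⟨x, hx, hmx⟩ := hmov
        rw [List.countP_eq_zero] at hc
        exact absurd (by simpa using hc x hx) (by simpa using hmx)
      obtain ⟨t, rest, hLE, htm, hrest⟩ := lemA hd he3 hed _ l rfl hcpos hgood hprod htrans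
      obtain ⟨hgood3, hprod3, htr3⟩ := hLE.transfer hgood hprod htrans
      have htg : GoodSwap d e t := hgood3 t (List.mem_cons_self)
      set x := t top with hxdef
      have hxv : (x : ℕ) < e - 1 := mover_val_lt htg htopv htm
      have htswap : t = Equiv.swap x top := swap_mover htg.1 htm
      have htt : t * t = 1 := isSwap_mul_self htg.1
      have hrestgood : ∀ r ∈ rest, GoodSwap d (e-1) r := by
        intro r hr
        have hg : GoodSwap d e r := hgood3 r (by simp [hr])
        refine ⟨hg.1, ?_⟩
        intro p hp
        have h1 : (p : ℕ) < e := moves_lt_of_subMoves hg.2 hp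
        have h2 : p ≠ top := by
          intro hc
          rw [hc] at hp
          exact hp (hrest r hr)
        have h3 : (p : ℕ) ≠ e - 1 := fun hc => h2 (Fin.ext (by rw [hc, htopv]))
        omega
      have hWsub : ∀ r ∈ {y : Perm (Fin d) | y ∈ rest}, r ∈ subMoves d (e-1) :=
        fun r hr => (hrestgood r hr).2
      have hprodrest : rest.prod = 1 := by
        have h5 := hprod3
        rw [List.prod_cons, List.prod_cons, ← mul_assoc, htt, one_mul] at h5
        exact h5
      have hsubins : {y : Perm (Fin d) | y ∈ t :: t :: rest}
          ⊆ insert t {r : Perm (Fin d) | r ∈ rest} := by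
        intro y hy
        simp only [Set.mem_setOf_eq, List.mem_cons] at hy
        rcases hy with rfl | rfl | hy
        · left; rfl
        · left; rfl
        · right; exact hy
      have htransrest : TransOn (e-1) rest := by
        intro a b hav hbv
        obtain ⟨h, hhmem, hhab⟩ := htr3 a b (by omega) (by omega)
        have hhmem2 : h ∈ Subgroup.closure (insert t {r : Perm (Fin d) | r ∈ rest}) :=
          Subgroup.closure_mono hsubins hhmem
        have haA : a ∈ ({y : Fin d | ∃ g ∈ Subgroup.closure {r : Perm (Fin d) | r ∈ rest}, g a = y} ∪
            {y : Fin d | y = top ∧ ∃ g ∈ Subgroup.closure {r : Perm (Fin d) | r ∈ rest}, g a = x}) := by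
          left
          exact ⟨1, one_mem _, by simp⟩
        have hbA := orbit_lemma htopv hxv hav htswap hWsub h hhmem2 a haA
        rw [hhab] at hbA
        rcases hbA with hbO | ⟨hc, _⟩
        · exact hbO
        · exfalso
          rw [hc, htopv] at hbv
          omega
      -- conjugate the pair so that its swap becomes (e-2, e-1)
      obtain ⟨g, hgmem, hgx⟩ := htransrest x (pt hd (e-2)) (by omega)
        (by rw [pt_val hd (by omega)]; omega)
      have hgtop : g top = top := by
        apply fixes_of_subMoves (closure_subMoves hWsub g hgmem)
        omega
      have hconj : LEq (t :: t :: rest)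
          ((g*t*g⁻¹) :: (g*t*g⁻¹) :: rest) := by
        have h6 := leq_conj_pair ([] : List (Perm (Fin d))) rest
          (g := g) (Subgroup.closure_mono (Set.subset_union_right) hgmem) t htt
        simpa using h6
      have hTswapeq : g*t*g⁻¹ = Equiv.swap (pt hd (e-2)) top := by
        rw [htswap, ← Equiv.swap_apply_apply, hgx, hgtop]
      -- recurse on rest
      have hIH := ihe (e-1) (by omega) (by omega) (by omega) rest hrestgood
        hprodrest htransrest
      have hlen : l.length = rest.length + 2 := by
        have := hLE.length
        simpa using this
      have hfinal : LEq l (stdL hd e l.length) := by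
        rw [hlen, stdL_cons hd he3 rest.length]
        refine (hLE.trans hconj).trans ?_
        rw [hTswapeq, htop]
        exact (hIH.cons _).cons _
      exact hfinal
    · -- base case e = 2
      have he2' : e = 2 := by omega
      subst he2'
      have hrep : l = List.replicate l.length (Equiv.swap (pt hd 0) (pt hd 1)) :=
        List.eq_replicate_iff.mpr ⟨rfl, fun b hb => goodSwap_two hd (hgood b hb)⟩
      rw [stdL_two]
      conv_lhs => rw [hrep]
      exact LEq.refl _

end HurwitzAux

namespace HurwitzAux

variable {G : Type*} [Group G]

theorem ofFn_lstep {n : ℕ} {c : Fin n → G} {u : List G} {a b : G} {v : List G}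
    (h : List.ofFn c = u ++ a :: b :: v) :
    u.length + 1 < n ∧
      List.ofFn (hurwitzMove u.length c) = u ++ (a * b * a⁻¹) :: a :: v := by
  have hlen : n = u.length + (v.length + 2) := by
    have := congrArg List.length h
    simpa using this
  have hin : u.length + 1 < n := by omega
  refine ⟨hin, ?_⟩
  have hget : ∀ (j : ℕ) (hj : j < n), c ⟨j, hj⟩
      = (u ++ a :: b :: v)[j]'(by simp; omega) := by
    intro j hj
    have h1 := List.getElem_ofFn (f := c) (i := j) (by simpa using hj)
    rw [← h1]
    simp only [h]
  have hca : c ⟨u.length, by omega⟩ = a := by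
    rw [hget u.length (by omega)]
    rw [List.getElem_append_right (le_refl u.length)]
    simp
  have hcb : c ⟨u.length + 1, by omega⟩ = b := by
    rw [hget (u.length+1) (by omega)]
    rw [List.getElem_append_right (by omega)]
    simp
  apply List.ext_getElem
  · simp; omega
  intro j h₁ h₂
  rw [List.getElem_ofFn]
  show hurwitzMove u.length c ⟨j, by simpa using h₁⟩ = _
  rw [hurwitzMove]
  rcases Nat.lt_trichotomy j u.length with hji | hji | hji
  · -- j < u.length : both sides are u[j]
    rw [dif_neg (by simp; omega), dif_neg (by simp; omega)]
    rw [hget j (by omega)]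
    rw [List.getElem_append_left (by omega), List.getElem_append_left (by omega)]
  · -- j = u.length
    rw [dif_pos (by simpa using hji), dif_pos hin]
    rw [hca, hcb]
    rw [List.getElem_append_right (by omega : u.length ≤ j)]
    have hj0 : j - u.length = 0 := by omega
    simp only [hj0, List.getElem_cons_zero]
  · rcases Nat.lt_trichotomy j (u.length+1) with hji2 | hji2 | hji2
    · omega
    · -- j = u.length + 1
      rw [dif_neg (by simp; omega), dif_pos (by simpa using hji2)]
      rw [hca]
      rw [List.getElem_append_right (by omega : u.length ≤ j)]
      have hj1 : j - u.length = 1 := by omega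
      simp only [hj1, List.getElem_cons_succ, List.getElem_cons_zero]
    · -- j > u.length + 1 : both sides are v[j - u.length - 2]
      rw [dif_neg (by simp; omega), dif_neg (by simp; omega)]
      rw [hget j (by have h3 := h₂; simp at h3; omega)]
      rw [List.getElem_append_right (by omega : u.length ≤ j),
        List.getElem_append_right (by omega : u.length ≤ j)]
      obtain ⟨k, hk⟩ : ∃ k, j - u.length = k + 2 := ⟨j - u.length - 2, by omega⟩
      simp only [hk, List.getElem_cons_succ]

theorem leq_lift {n : ℕ} (φ : BraidGroup n →* Equiv.Perm (Fin n → G))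
    (hφ : IsHurwitzAction φ) {l₁ l₂ : List G} (h : LEq l₁ l₂) :
    l₁.length = l₂.length ∧ ∀ (c₁ c₂ : Fin n → G), List.ofFn c₁ = l₁ → List.ofFn c₂ = l₂ →
      ∃ β : BraidGroup n, φ β c₁ = c₂ := by
  induction h with
  | rel x y hxy =>
    obtain ⟨u, a, b, v⟩ := hxy
    refine ⟨by simp, ?_⟩
    intro c₁ c₂ h1 h2
    obtain ⟨hin, heq⟩ := ofFn_lstep h1
    refine ⟨braidGen n u.length, ?_⟩
    rw [hφ u.length hin c₁]
    apply List.ofFn_injective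
    rw [heq, h2]
  | refl x =>
    refine ⟨rfl, ?_⟩
    intro c₁ c₂ h1 h2
    refine ⟨1, ?_⟩
    rw [map_one]
    have hcc : c₁ = c₂ := List.ofFn_injective (by rw [h1, h2])
    rw [hcc]
    rfl
  | symm x y hxy ih =>
    refine ⟨ih.1.symm, ?_⟩
    intro c₁ c₂ h1 h2
    obtain ⟨β, hβ⟩ := ih.2 c₂ c₁ h2 h1
    refine ⟨β⁻¹, ?_⟩
    rw [map_inv, ← hβ]
    simp
  | trans x y z hxy hyz ih₁ ih₂ =>
    refine ⟨ih₁.1.trans ih₂.1, ?_⟩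
    intro c₁ c₂ h1 h2
    have hylen : y.length = n := by
      rw [← ih₁.1, ← h1]
      simp
    have hymid : List.ofFn (fun k : Fin n => y[(k : ℕ)]'(by omega)) = y := by
      apply List.ext_getElem
      · simp [hylen]
      · intro j hj₁ hj₂
        simp [List.getElem_ofFn]
    obtain ⟨β₁, hβ₁⟩ := ih₁.2 c₁ _ h1 hymid
    obtain ⟨β₂, hβ₂⟩ := ih₂.2 _ c₂ hymid h2
    refine ⟨β₂ * β₁, ?_⟩
    rw [map_mul, Equiv.Perm.mul_apply, hβ₁, hβ₂]

end HurwitzAux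

open HurwitzAux in
theorem stdL_eq_stdTuple {d n : ℕ} (hd : 2 ≤ d) :
    List.ofFn (stdTuple d n) = stdL hd d n := by
  rw [stdL]
  apply congrArg
  funext i
  by_cases hcnd : (i : ℕ) + 4 ≤ 2 * d
  · rw [stdTuple, dif_pos hcnd, if_pos hcnd]
    congr 1 <;> apply Fin.ext <;> rw [pt_val hd (by omega)]
  · rw [stdTuple, dif_neg hcnd, dif_pos hd, if_neg hcnd]
    congr 1 <;> apply Fin.ext <;> rw [pt_val hd (by omega)]

/-- For fixed degree and (even) number of branch points there is a unique
connected simple branched cover of `S²`: any tuple of transpositions generating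
a transitive subgroup with trivial product can be brought to the standard tuple
by a global conjugation followed by the Hurwitz action of a braid. -/
theorem hurwitz_orbit_std_of_trivial_product (d n : ℕ) (hd : 2 ≤ d)
    (hn : 2 * d - 2 ≤ n) (hne : Even n)
    (c : Fin n → Equiv.Perm (Fin d)) (hc : ∀ i, (c i).IsSwap)
    (htrans : ∀ a b : Fin d, ∃ g ∈ Subgroup.closure (Set.range c), g a = b)
    (hprod : (List.ofFn c).prod = 1)
    (φ : BraidGroup n →* Equiv.Perm (Fin n → Equiv.Perm (Fin d)))
    (hφ : IsHurwitzAction φ) :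
    ∃ (g : Equiv.Perm (Fin d)) (β : BraidGroup n),
      φ β (fun k => g * c k * g⁻¹) = stdTuple d n := by
  classical
  refine ⟨1, ?_⟩
  have hc0 : (fun k => (1 : Equiv.Perm (Fin d)) * c k * 1⁻¹) = c := by
    funext k
    simp
  have hgood : ∀ x ∈ List.ofFn c, HurwitzAux.GoodSwap d d x := by
    intro x hx
    rw [List.mem_ofFn] at hx
    obtain ⟨i, rfl⟩ := hx
    exact ⟨hc i, fun p _ => p.isLt⟩
  have hseteq : Set.range c = {x : Equiv.Perm (Fin d) | x ∈ List.ofFn c} := by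
    ext x
    simp [List.mem_ofFn, Set.mem_range]
  have htrans' : HurwitzAux.TransOn d (List.ofFn c) := by
    intro a b _ _
    obtain ⟨g, hg, hab⟩ := htrans a b
    exact ⟨g, by rwa [← hseteq], hab⟩
  have hLE := HurwitzAux.thmT hd d hd (le_refl d) (List.ofFn c) hgood hprod htrans'
  have hstd : HurwitzAux.stdL hd d (List.ofFn c).length = List.ofFn (stdTuple d n) := by
    rw [List.length_ofFn, stdL_eq_stdTuple hd]
  rw [hstd] at hLE
  obtain ⟨-, hlift⟩ := HurwitzAux.leq_lift φ hφ hLE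
  obtain ⟨β, hβ⟩ := hlift c (stdTuple d n) rfl rfl
  refine ⟨β, ?_⟩
  rw [hc0]
  exact hβ
end

section
/- Let d ≥ 3 and n ≥ 2d−2 be integers and let c⁰ ∈ (S_d)^n be the standard tuple. Then: (a) h_i(c⁰) = c⁰ for every index i with 0 ≤ i ≤ n−2 such that i is even or i ≥ 2d−4; (b) for every odd index i with i < 2d−4, one has h_i³(c⁰) = c⁰, while h_i(c⁰) ≠ c⁰ and h_i²(c⁰) ≠ c⁰. (That is, with respect to the standard coloring, the half-twist x_i is liftable, i.e. Type 1, when i ≥ 2d−4 or i is even, and is Type 3 with minimal liftable power 3 when i is odd and i < 2d−4.) -/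
private lemma hurwitzMove_eq_of {G : Type*} [Group G] {n i : ℕ} (h : i + 1 < n)
    (c c' : Fin n → G)
    (hA : c' ⟨i, Nat.lt_of_succ_lt h⟩ =
      c ⟨i, Nat.lt_of_succ_lt h⟩ * c ⟨i + 1, h⟩ * (c ⟨i, Nat.lt_of_succ_lt h⟩)⁻¹)
    (hB : c' ⟨i + 1, h⟩ = c ⟨i, Nat.lt_of_succ_lt h⟩)
    (hC : ∀ k : Fin n, (k : ℕ) ≠ i → (k : ℕ) ≠ i + 1 → c' k = c k) :
    hurwitzMove i c = c' := by
  funext k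
  by_cases h1 : (k : ℕ) = i
  · have hk : k = ⟨i, Nat.lt_of_succ_lt h⟩ := Fin.ext h1
    subst hk
    simp only [hurwitzMove]
    rw [dif_pos trivial, dif_pos h]
    exact hA.symm
  · by_cases h2 : (k : ℕ) = i + 1
    · have hk : k = ⟨i + 1, h⟩ := Fin.ext h2
      subst hk
      simp only [hurwitzMove]
      rw [dif_neg h1, dif_pos trivial]
      exact hB.symm
    · simp only [hurwitzMove]
      rw [dif_neg h1, dif_neg h2]
      exact (hC k h1 h2).symm

/-- With respect to the standard coloring, the elementary half-twist `x_i` is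
liftable (Type 1) when `i` is even or `i ≥ 2d-4`, and is Type 3 — with minimal
positive liftable power `3` — when `i` is odd and `i < 2d-4`. -/
theorem hurwitzMove_type_on_stdTuple (d n : ℕ) (hd : 3 ≤ d) (hn : 2 * d - 2 ≤ n) :
    (∀ i : ℕ, i + 1 < n → (i % 2 = 0 ∨ 2 * d - 4 ≤ i) →
      hurwitzMove i (stdTuple d n) = stdTuple d n) ∧
    (∀ i : ℕ, i + 1 < n → i % 2 = 1 → i < 2 * d - 4 →
      (hurwitzMove i)^[3] (stdTuple d n) = stdTuple d n ∧
      hurwitzMove i (stdTuple d n) ≠ stdTuple d n ∧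
      (hurwitzMove i)^[2] (stdTuple d n) ≠ stdTuple d n) := by
  constructor
  · intro i hi hcond
    have heq : stdTuple d n ⟨i + 1, hi⟩ = stdTuple d n ⟨i, Nat.lt_of_succ_lt hi⟩ := by
      unfold stdTuple
      simp only [Fin.val_mk]
      split_ifs with h1 h2 h3 <;>
        first
        | rfl
        | omega
        | (congr 1 <;> exact Fin.ext (by simp only [Fin.val_mk]; omega))
    exact hurwitzMove_eq_of hi _ _
      (by rw [heq]; group) (by rw [heq]) (fun k _ _ => rfl)
  · intro i hi hodd hlt
    have hq : i / 2 ≤ d - 3 := by omega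
    set q := i / 2 with hqdef
    let p0 : Fin d := ⟨d - 3 - q, by omega⟩
    let p1 : Fin d := ⟨d - 2 - q, by omega⟩
    let p2 : Fin d := ⟨d - 1 - q, by omega⟩
    have hp01 : p0 ≠ p1 := by simp only [p0, p1, Fin.ne_iff_vne, Fin.val_mk]; omega
    have hp02 : p0 ≠ p2 := by simp only [p0, p2, Fin.ne_iff_vne, Fin.val_mk]; omega
    have hp12 : p1 ≠ p2 := by simp only [p1, p2, Fin.ne_iff_vne, Fin.val_mk]; omega
    set s := Equiv.swap p1 p2 with hs
    set t := Equiv.swap p0 p1 with ht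
    set u := Equiv.swap p0 p2 with hu
    set c0 := stdTuple d n with hc0
    have key : ∀ (a b : Fin d) (f : Equiv.Perm (Fin d)),
        f * Equiv.swap a b * f⁻¹ = Equiv.swap (f a) (f b) :=
      fun a b f => (Equiv.swap_apply_apply f a b).symm
    have hv0 : c0 ⟨i, Nat.lt_of_succ_lt hi⟩ = s := by
      rw [hc0]; unfold stdTuple
      rw [dif_pos (by simp only [Fin.val_mk]; omega)]
    have hv1 : c0 ⟨i + 1, hi⟩ = t := by
      rw [hc0]; unfold stdTuple
      rw [dif_pos (by simp only [Fin.val_mk]; omega)]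
      have h2 : (i + 1) / 2 = q + 1 := by omega
      rw [ht]
      congr 1 <;> exact Fin.ext (by simp only [p0, p1, p2, Fin.val_mk, h2]; omega)
    have hsts : s * t * s⁻¹ = u := by
      rw [hs, ht, hu, key, Equiv.swap_apply_left,
        Equiv.swap_apply_of_ne_of_ne hp01 hp02]
    have husu : u * s * u⁻¹ = t := by
      rw [hs, ht, hu, key, Equiv.swap_apply_right,
        Equiv.swap_apply_of_ne_of_ne (Ne.symm hp01) hp12, Equiv.swap_comm]
    have htut : t * u * t⁻¹ = s := by
      rw [hs, ht, hu, key, Equiv.swap_apply_left,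
        Equiv.swap_apply_of_ne_of_ne (Ne.symm hp02) (Ne.symm hp12)]
    set c1 : Fin n → Equiv.Perm (Fin d) :=
      fun m => if (m : ℕ) = i then u else if (m : ℕ) = i + 1 then s else c0 m with hc1
    set c2 : Fin n → Equiv.Perm (Fin d) :=
      fun m => if (m : ℕ) = i then t else if (m : ℕ) = i + 1 then u else c0 m with hc2
    have hc1i : c1 ⟨i, Nat.lt_of_succ_lt hi⟩ = u := by
      simp only [hc1]; simp
    have hc1i1 : c1 ⟨i + 1, hi⟩ = s := by
      simp only [hc1]; simp
    have hc2i : c2 ⟨i, Nat.lt_of_succ_lt hi⟩ = t := by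
      simp only [hc2]; simp
    have hc2i1 : c2 ⟨i + 1, hi⟩ = u := by
      simp only [hc2]; simp
    have step1 : hurwitzMove i c0 = c1 := by
      refine hurwitzMove_eq_of hi _ _ ?_ ?_ ?_
      · rw [hc1i, hv0, hv1, hsts]
      · rw [hc1i1, hv0]
      · intro k hk1 hk2
        simp only [hc1]; rw [if_neg hk1, if_neg hk2]
    have step2 : hurwitzMove i c1 = c2 := by
      refine hurwitzMove_eq_of hi _ _ ?_ ?_ ?_
      · rw [hc2i, hc1i, hc1i1, husu]
      · rw [hc2i1, hc1i]
      · intro k hk1 hk2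
        simp only [hc1, hc2]; rw [if_neg hk1, if_neg hk2, if_neg hk1, if_neg hk2]
    have step3 : hurwitzMove i c2 = c0 := by
      refine hurwitzMove_eq_of hi _ _ ?_ ?_ ?_
      · rw [hv0, hc2i, hc2i1, htut]
      · rw [hv1, hc2i]
      · intro k hk1 hk2
        simp only [hc2]; rw [if_neg hk1, if_neg hk2]
    refine ⟨?_, ?_, ?_⟩
    · show hurwitzMove i (hurwitzMove i (hurwitzMove i c0)) = c0
      rw [step1, step2, step3]
    · intro hcontra
      rw [step1] at hcontra
      have h2 := congrFun hcontra ⟨i, Nat.lt_of_succ_lt hi⟩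
      rw [hc1i, hv0] at h2
      have h3 := congrArg (fun e => e p1) h2
      simp only [hu, hs] at h3
      rw [Equiv.swap_apply_of_ne_of_ne (Ne.symm hp01) hp12,
        Equiv.swap_apply_left] at h3
      exact hp12 h3
    · intro hcontra
      have h1 : (hurwitzMove i)^[2] c0 = c2 := by
        show hurwitzMove i (hurwitzMove i c0) = c2
        rw [step1, step2]
      rw [h1] at hcontra
      have h2 := congrFun hcontra ⟨i, Nat.lt_of_succ_lt hi⟩
      rw [hc2i, hv0] at h2
      have h3 := congrArg (fun e => e p0) h2
      simp only [ht, hs] at h3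
      rw [Equiv.swap_apply_left,
        Equiv.swap_apply_of_ne_of_ne hp01 hp02] at h3
      exact hp01 h3.symm
end

section
/- Let d ≥ 3 and n ≥ 2d−2 be integers, and let i, j be indices with i odd, j − i odd, j − i ≥ 3, and j ≤ 2d−4. Define y_{i,j} = σ_{j−1} σ_{j−2} ⋯ σ_{i+1} · σ_i · σ_{i+1}⁻¹ σ_{i+2}⁻¹ ⋯ σ_{j−1}⁻¹ ∈ B_n (the half-twist about the arc from the i-th to the j-th marked point passing in front of the intermediate marked points). Then, under the Hurwitz action on (S_d)^n, y_{i,j}² · c⁰ = c⁰ while y_{i,j} · c⁰ ≠ c⁰. (That is, y_{i,j} is Type 2 with respect to the standard coloring, so its square is liftable.) -/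
/-- The braid `y_{i,j} = σ_{j-1} σ_{j-2} ⋯ σ_{i+1} · σ_i · σ_{i+1}⁻¹ σ_{i+2}⁻¹ ⋯ σ_{j-1}⁻¹`,
the half-twist about the arc from the `i`-th to the `j`-th marked point passing
in front of the intermediate marked points. -/
def yBraid (n i j : ℕ) : BraidGroup n :=
  ((List.range (j - 1 - i)).map (fun t => braidGen n (j - 1 - t))).prod *
    braidGen n i *
    ((List.range (j - 1 - i)).map (fun t => (braidGen n (i + 1 + t))⁻¹)).prod

section Aux
variable {G : Type*} [Group G] {n : ℕ}

/-- Extend a tuple to `ℕ` by `1`. -/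
def extG (c : Fin n → G) (m : ℕ) : G := if h : m < n then c ⟨m, h⟩ else 1

lemma extG_lt (c : Fin n → G) {m : ℕ} (h : m < n) : extG c m = c ⟨m, h⟩ := dif_pos h

/-- The action of the half-twist `y_{i,j}` on tuples. -/
def yMoveG (i j : ℕ) (c : Fin n → G) : Fin n → G := fun k =>
  if (k : ℕ) = i then extG c i * extG c j * (extG c i)⁻¹
  else if (k : ℕ) = j then extG c i
  else if i < (k : ℕ) ∧ (k : ℕ) < j then
    extG c i * (extG c j)⁻¹ * extG c (k : ℕ) * (extG c j * (extG c i)⁻¹)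
  else c k

/-- The inverse Hurwitz move. -/
def invMoveG (j : ℕ) (c : Fin n → G) : Fin n → G := fun k =>
  if (k : ℕ) = j then extG c (j + 1)
  else if (k : ℕ) = j + 1 then (extG c (j + 1))⁻¹ * extG c j * extG c (j + 1)
  else c k

lemma hurwitz_invMove (j : ℕ) (hj : j + 1 < n) (c : Fin n → G) :
    hurwitzMove j (invMoveG j c) = c := by
  funext k
  obtain ⟨kv, hk⟩ := k
  simp only [hurwitzMove, invMoveG, extG]
  split_ifs with h1 h2 h3 <;> simp_all <;> first | omega | group


lemma phi_inv (φ : BraidGroup n →* Equiv.Perm (Fin n → G)) (hφ : IsHurwitzAction φ)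
    (j : ℕ) (hj : j + 1 < n) (c : Fin n → G) :
    (φ (braidGen n j))⁻¹ c = invMoveG j c := by
  have h1 : φ (braidGen n j) (invMoveG j c) = c := by
    rw [hφ j hj, hurwitz_invMove j hj]
  have := congrArg ((φ (braidGen n j))⁻¹ : Equiv.Perm (Fin n → G)) h1
  simpa using this.symm

lemma yBraid_succ (n i j : ℕ) (h : i + 1 ≤ j) :
    yBraid n i (j + 1) = braidGen n j * yBraid n i j * (braidGen n j)⁻¹ := by
  unfold yBraid
  have h1 : j + 1 - 1 - i = (j - 1 - i) + 1 := by omega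
  have hL : (List.map (fun t => braidGen n (j + 1 - 1 - t)) (List.range (j - 1 - i + 1))).prod =
      braidGen n j * (List.map (fun t => braidGen n (j - 1 - t)) (List.range (j - 1 - i))).prod := by
    rw [List.range_succ_eq_map]
    simp only [List.map_cons, List.map_map, List.prod_cons, Nat.add_sub_cancel, Nat.sub_zero]
    congr 1
    refine congrArg (α := List (BraidGroup n)) List.prod ?_
    apply List.map_congr_left
    intro t _
    simp only [Function.comp]
    congr 1
    omega
  have hR : (List.map (fun t => (braidGen n (i + 1 + t))⁻¹) (List.range (j - 1 - i + 1))).prod =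
      (List.map (fun t => (braidGen n (i + 1 + t))⁻¹) (List.range (j - 1 - i))).prod *
        (braidGen n j)⁻¹ := by
    rw [List.range_succ]
    simp only [List.map_append, List.map_cons, List.map_nil, List.prod_append, List.prod_cons,
      List.prod_nil, mul_one]
    have h3 : i + 1 + (j - 1 - i) = j := by omega
    rw [h3]
  rw [h1, hL, hR]
  group

lemma extG_self (c : Fin n → G) (k : Fin n) : extG c (k : ℕ) = c k := by
  simp [extG]

lemma yM_at_i {i j : ℕ} (c : Fin n → G) {k : Fin n} (hki : (k : ℕ) = i) :
    yMoveG i j c k = extG c i * extG c j * (extG c i)⁻¹ := by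
  simp only [yMoveG]; rw [hki, if_pos rfl]

lemma yM_at_j {i j : ℕ} (c : Fin n → G) {k : Fin n} (hkj : (k : ℕ) = j) (hij : i < j) :
    yMoveG i j c k = extG c i := by
  simp only [yMoveG]; rw [hkj, if_neg (by omega), if_pos rfl]

lemma yM_mid {i j : ℕ} (c : Fin n → G) {k : Fin n} (h1 : i < (k : ℕ)) (h2 : (k : ℕ) < j) :
    yMoveG i j c k = extG c i * (extG c j)⁻¹ * extG c (k : ℕ) * (extG c j * (extG c i)⁻¹) := by
  simp only [yMoveG]; rw [if_neg (by omega), if_neg (by omega), if_pos ⟨h1, h2⟩]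

lemma yM_out {i j : ℕ} (c : Fin n → G) {k : Fin n} (h1 : (k : ℕ) ≠ i) (h2 : (k : ℕ) ≠ j)
    (h3 : ¬(i < (k : ℕ) ∧ (k : ℕ) < j)) : yMoveG i j c k = c k := by
  simp only [yMoveG]; rw [if_neg h1, if_neg h2, if_neg h3]

lemma iM_at_j {j : ℕ} (c : Fin n → G) {k : Fin n} (hkj : (k : ℕ) = j) :
    invMoveG j c k = extG c (j + 1) := by
  simp only [invMoveG]; rw [hkj, if_pos rfl]

lemma iM_at_j1 {j : ℕ} (c : Fin n → G) {k : Fin n} (hkj : (k : ℕ) = j + 1) :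
    invMoveG j c k = (extG c (j + 1))⁻¹ * extG c j * extG c (j + 1) := by
  simp only [invMoveG]; rw [hkj, if_neg (by omega), if_pos rfl]

lemma iM_out {j : ℕ} (c : Fin n → G) {k : Fin n} (h1 : (k : ℕ) ≠ j) (h2 : (k : ℕ) ≠ j + 1) :
    invMoveG j c k = c k := by
  simp only [invMoveG]; rw [if_neg h1, if_neg h2]

lemma hM_at_i {i : ℕ} (c : Fin n → G) {k : Fin n} (hki : (k : ℕ) = i) (h2 : i + 1 < n) :
    hurwitzMove i c k = extG c i * extG c (i + 1) * (extG c i)⁻¹ := by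
  simp only [hurwitzMove]
  rw [dif_pos hki, dif_pos h2, extG_lt c (Nat.lt_of_succ_lt h2), extG_lt c h2]

lemma hM_at_i1 {i : ℕ} (c : Fin n → G) {k : Fin n} (hki : (k : ℕ) = i + 1) :
    hurwitzMove i c k = extG c i := by
  have hi : i < n := by have := k.isLt; omega
  simp only [hurwitzMove]
  rw [dif_neg (by omega), dif_pos hki, extG_lt c hi]

lemma hM_out {i : ℕ} (c : Fin n → G) {k : Fin n} (h1 : (k : ℕ) ≠ i) (h2 : (k : ℕ) ≠ i + 1) :
    hurwitzMove i c k = c k := by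
  simp only [hurwitzMove]
  rw [dif_neg h1, dif_neg h2]

lemma yM_at_i' (i j : ℕ) (c : Fin n → G) (hi : i < n) :
    yMoveG i j c ⟨i, hi⟩ = extG c i * extG c j * (extG c i)⁻¹ := yM_at_i c rfl

lemma yM_at_j' (i j : ℕ) (c : Fin n → G) (hj : j < n) (hij : i < j) :
    yMoveG i j c ⟨j, hj⟩ = extG c i := yM_at_j c rfl hij

lemma yM_mid' (i j m : ℕ) (c : Fin n → G) (hm : m < n) (h1 : i < m) (h2 : m < j) :
    yMoveG i j c ⟨m, hm⟩ = extG c i * (extG c j)⁻¹ * extG c m * (extG c j * (extG c i)⁻¹) :=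
  yM_mid c h1 h2

lemma yM_out' (i j m : ℕ) (c : Fin n → G) (hm : m < n) (h1 : m ≠ i) (h2 : m ≠ j)
    (h3 : ¬(i < m ∧ m < j)) : yMoveG i j c ⟨m, hm⟩ = c ⟨m, hm⟩ := yM_out c h1 h2 h3

lemma iM_at_j' (j : ℕ) (c : Fin n → G) (hj : j < n) :
    invMoveG j c ⟨j, hj⟩ = extG c (j + 1) := iM_at_j c rfl

lemma iM_at_j1' (j : ℕ) (c : Fin n → G) (hj : j + 1 < n) :
    invMoveG j c ⟨j + 1, hj⟩ = (extG c (j + 1))⁻¹ * extG c j * extG c (j + 1) :=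
  iM_at_j1 c rfl

lemma iM_out' (j m : ℕ) (c : Fin n → G) (hm : m < n) (h1 : m ≠ j) (h2 : m ≠ j + 1) :
    invMoveG j c ⟨m, hm⟩ = c ⟨m, hm⟩ := iM_out c h1 h2

lemma hurwitz_yMove (φ : BraidGroup n →* Equiv.Perm (Fin n → G)) (hφ : IsHurwitzAction φ)
    (i : ℕ) : ∀ j, i + 1 ≤ j → j < n → ∀ c : Fin n → G, φ (yBraid n i j) c = yMoveG i j c := by
  intro j hij0
  induction j, hij0 using Nat.le_induction with
  | base =>
    intro hj c
    have hb : yBraid n i (i + 1) = braidGen n i := by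
      unfold yBraid; simp
    rw [hb, hφ i hj c]
    funext k
    rcases eq_or_ne (k : ℕ) i with hki | hki
    · rw [hM_at_i c hki hj, yM_at_i c hki]
    · rcases eq_or_ne (k : ℕ) (i + 1) with hki1 | hki1
      · rw [hM_at_i1 c hki1, yM_at_j c hki1 (by omega)]
      · rw [hM_out c hki hki1, yM_out c hki hki1 (by omega)]
  | succ j hij ih =>
    intro hj c
    rw [yBraid_succ n i j hij]
    have hjn : j < n := by omega
    have hin : i < n := by omega
    simp only [map_mul, map_inv, Equiv.Perm.mul_apply]
    rw [phi_inv φ hφ j hj c, ih hjn, hφ j hj]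
    set e := invMoveG j c with he
    have hei : extG e i = extG c i := by
      rw [extG_lt e hin, extG_lt c hin, he, iM_out' j i c hin (by omega) (by omega)]
    have hej : extG e j = extG c (j + 1) := by
      rw [extG_lt e hjn, he, iM_at_j' j c hjn]
    funext k
    rcases eq_or_ne (k : ℕ) j with hkj | hkj
    · rw [hM_at_i (yMoveG i j e) hkj hj, yM_mid c (by omega) (by omega : (k:ℕ) < j + 1)]
      have h1 : extG (yMoveG i j e) j = extG c i := by
        rw [extG_lt _ hjn, yM_at_j' i j e hjn (by omega), hei]
      have h2 : extG (yMoveG i j e) (j + 1) =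
          (extG c (j + 1))⁻¹ * extG c j * extG c (j + 1) := by
        rw [extG_lt _ hj, yM_out' i j (j+1) e hj (by omega) (by omega) (by omega),
          he, iM_at_j1' j c hj]
      rw [h1, h2, hkj]
      group
    · rcases eq_or_ne (k : ℕ) (j + 1) with hkj1 | hkj1
      · rw [hM_at_i1 (yMoveG i j e) hkj1, yM_at_j c hkj1 (by omega)]
        rw [extG_lt _ hjn, yM_at_j' i j e hjn (by omega), hei]
      · rw [hM_out (yMoveG i j e) hkj hkj1]
        rcases eq_or_ne (k : ℕ) i with hki | hki
        · rw [yM_at_i e hki, yM_at_i c hki, hei, hej]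
        · by_cases hmid : i < (k : ℕ) ∧ (k : ℕ) < j
          · rw [yM_mid e hmid.1 hmid.2, yM_mid c hmid.1 (by omega : (k:ℕ) < j + 1),
              hei, hej]
            congr 1
            rw [extG_self, extG_self, he, iM_out c hkj hkj1]
          · rw [yM_out e hki hkj hmid, yM_out c hki (by omega) (by omega),
              he, iM_out c hkj hkj1]

lemma yMoveG_sq (i j : ℕ) (hi : i < n) (hj : j < n) (hij : i < j) (c : Fin n → G)
    (hcomm : extG c i * extG c j = extG c j * extG c i) :
    yMoveG i j (yMoveG i j c) = c := by
  set d := yMoveG i j c with hd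
  have hdi : extG d i = extG c j := by
    rw [extG_lt d hi, hd, yM_at_i' i j c hi]
    rw [hcomm]; group
  have hdj : extG d j = extG c i := by
    rw [extG_lt d hj, hd, yM_at_j' i j c hj hij]
  funext k
  rcases eq_or_ne (k : ℕ) i with hki | hki
  · have hk' : k = ⟨i, hi⟩ := Fin.ext hki
    subst hk'
    rw [yM_at_i' i j d hi, hdi, hdj, ← extG_lt c hi, ← hcomm]
    group
  · rcases eq_or_ne (k : ℕ) j with hkj | hkj
    · have hk' : k = ⟨j, hj⟩ := Fin.ext hkj
      subst hk'
      rw [yM_at_j' i j d hj hij, hdi, ← extG_lt c hj]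
    · by_cases hmid : i < (k : ℕ) ∧ (k : ℕ) < j
      · rw [yM_mid d hmid.1 hmid.2, hdi, hdj, extG_self, hd,
          yM_mid c hmid.1 hmid.2, extG_self]
        group
      · rw [yM_out d hki hkj hmid, hd, yM_out c hki hkj hmid]
end Aux

lemma final_aux {G : Type*} [Group G] {n : ℕ}
    (φ : BraidGroup n →* Equiv.Perm (Fin n → G)) (hφ : IsHurwitzAction φ)
    (i j : ℕ) (hij : i + 1 ≤ j) (hjn : j < n) (c : Fin n → G)
    (hcomm : extG c i * extG c j = extG c j * extG c i)
    (hne : extG c i ≠ extG c j) :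
    φ (yBraid n i j ^ 2) c = c ∧ φ (yBraid n i j) c ≠ c := by
  have hin : i < n := by omega
  have hy := hurwitz_yMove φ hφ i j hij hjn
  constructor
  · rw [pow_two, map_mul, Equiv.Perm.mul_apply, hy, hy,
      yMoveG_sq i j hin hjn (by omega) c hcomm]
  · intro hcon
    rw [hy] at hcon
    have h2 := congrFun hcon ⟨i, hin⟩
    rw [yM_at_i' i j c hin, ← extG_lt c hin] at h2
    apply hne
    have h3 := congrArg (fun x => (extG c i)⁻¹ * x * extG c i) h2
    simpa [mul_assoc] using h3.symm

lemma swap_comm' {d : ℕ} {p1 p2 p3 p4 : Fin d} (h31 : p3 ≠ p1) (h32 : p3 ≠ p2)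
    (h41 : p4 ≠ p1) (h42 : p4 ≠ p2) :
    Equiv.swap p3 p4 * Equiv.swap p1 p2 = Equiv.swap p1 p2 * Equiv.swap p3 p4 := by
  have hdisj : (Equiv.swap p3 p4).Disjoint (Equiv.swap p1 p2) := by
    intro x
    by_cases h3 : x = p3
    · right; subst h3; exact Equiv.swap_apply_of_ne_of_ne h31 h32
    · by_cases h4 : x = p4
      · right; subst h4; exact Equiv.swap_apply_of_ne_of_ne h41 h42
      · left; exact Equiv.swap_apply_of_ne_of_ne h3 h4
  exact hdisj.commute.eq

lemma swap_ne' {d : ℕ} {p1 p2 p3 p4 : Fin d} (h34 : p3 ≠ p4) (h41 : p4 ≠ p1)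
    (h42 : p4 ≠ p2) : Equiv.swap p3 p4 ≠ Equiv.swap p1 p2 := by
  intro h
  have h4 := congrArg (fun f : Equiv.Perm (Fin d) => f p4) h
  rw [Equiv.swap_apply_right, Equiv.swap_apply_of_ne_of_ne h41 h42] at h4
  exact h34 h4

lemma stdTuple_eval (d n' m : ℕ) (hm : m < n') (hc : m + 4 ≤ 2 * d) :
    stdTuple d n' ⟨m, hm⟩ =
      Equiv.swap ⟨d - 2 - m / 2, by omega⟩ ⟨d - 1 - m / 2, by omega⟩ := by
  simp only [stdTuple]
  rw [dif_pos hc]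
/-- With respect to the standard coloring, `y_{i,j}` (for `i` odd, `j - i` odd
and `≥ 3`, `j ≤ 2d-4`) is Type 2: its square fixes the standard tuple but the
half-twist itself does not. -/
theorem yBraid_type_two (d n : ℕ) (hd : 3 ≤ d) (hn : 2 * d - 2 ≤ n)
    (i j : ℕ) (hi : i % 2 = 1) (hij : (j - i) % 2 = 1) (hij3 : i + 3 ≤ j)
    (hj : j ≤ 2 * d - 4)
    (φ : BraidGroup n →* Equiv.Perm (Fin n → Equiv.Perm (Fin d)))
    (hφ : IsHurwitzAction φ) :
    φ (yBraid n i j ^ 2) (stdTuple d n) = stdTuple d n ∧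
    φ (yBraid n i j) (stdTuple d n) ≠ stdTuple d n := by
  have hin : i < n := by omega
  have hjn : j < n := by omega
  have hi2 : i / 2 ≤ d - 4 := by omega
  have hj2 : j / 2 ≤ d - 2 := by omega
  have hQ : i / 2 + 2 ≤ j / 2 := by omega
  have ha : extG (stdTuple d n) i =
      Equiv.swap (⟨d - 2 - i / 2, by omega⟩ : Fin d) ⟨d - 1 - i / 2, by omega⟩ := by
    rw [extG_lt _ hin, stdTuple_eval d n i hin (by omega)]
  have hb : extG (stdTuple d n) j =
      Equiv.swap (⟨d - 2 - j / 2, by omega⟩ : Fin d) ⟨d - 1 - j / 2, by omega⟩ := by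
    rw [extG_lt _ hjn, stdTuple_eval d n j hjn (by omega)]
  apply final_aux φ hφ i j (by omega) hjn
  · rw [ha, hb]
    exact swap_comm'
      (Fin.ne_of_val_ne (show d - 2 - i / 2 ≠ d - 2 - j / 2 by omega))
      (Fin.ne_of_val_ne (show d - 2 - i / 2 ≠ d - 1 - j / 2 by omega))
      (Fin.ne_of_val_ne (show d - 1 - i / 2 ≠ d - 2 - j / 2 by omega))
      (Fin.ne_of_val_ne (show d - 1 - i / 2 ≠ d - 1 - j / 2 by omega))
  · rw [ha, hb]
    exact swap_ne'
      (Fin.ne_of_val_ne (show d - 2 - i / 2 ≠ d - 1 - i / 2 by omega))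
      (Fin.ne_of_val_ne (show d - 1 - i / 2 ≠ d - 2 - j / 2 by omega))
      (Fin.ne_of_val_ne (show d - 1 - i / 2 ≠ d - 1 - j / 2 by omega))
end

section
/- Let d ≥ 3 and n ≥ 2d−2 be integers, and let i, j be indices with i odd, j − i odd, j − i ≥ 3, and j ≤ 2d−4. Define z_{i,j} = σ_{j−1}⁻¹ σ_{j−2}⁻¹ ⋯ σ_{i+1}⁻¹ · σ_i · σ_{i+1} σ_{i+2} ⋯ σ_{j−1} ∈ B_n (the half-twist about the arc from the i-th to the j-th marked point passing behind the intermediate marked points). Then, under the Hurwitz action on (S_d)^n, z_{i,j}² · c⁰ = c⁰ while z_{i,j} · c⁰ ≠ c⁰. (That is, z_{i,j} is Type 2 with respect to the standard coloring — which holds because there is a liftable elementary half-twist x_k strictly between the endpoints — so its square is liftable.) -/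
/-- The braid `z_{i,j} = σ_{j-1}⁻¹ σ_{j-2}⁻¹ ⋯ σ_{i+1}⁻¹ · σ_i · σ_{i+1} σ_{i+2} ⋯ σ_{j-1}`,
the half-twist about the arc from the `i`-th to the `j`-th marked point passing
behind the intermediate marked points. -/
def zBraid (n i j : ℕ) : BraidGroup n :=
  ((List.range (j - 1 - i)).map (fun t => (braidGen n (j - 1 - t))⁻¹)).prod *
    braidGen n i *
    ((List.range (j - 1 - i)).map (fun t => braidGen n (i + 1 + t))).prod

section ZAux

variable {G : Type*} [Group G] {n : ℕ}

/-- Lookup an entry of a tuple by a natural number index (1 out of range). -/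
def lookG (c : Fin n → G) (t : ℕ) : G := if h : t < n then c ⟨t, h⟩ else 1

lemma lookG_coe (c : Fin n → G) (k : Fin n) : lookG c (k : ℕ) = c k := by
  simp [lookG, k.isLt]

lemma lookG_mk (c : Fin n → G) (t : ℕ) (h : t < n) : lookG c t = c ⟨t, h⟩ := by
  simp [lookG, h]

/-- Closed form for the partial Hurwitz action of `σ_{j-s} ⋯ σ_{j-1}`. -/
def Fham (j : ℕ) (c : Fin n → G) (s : ℕ) : Fin n → G := fun k =>
  if (k : ℕ) < j - s then c k
  else if (k : ℕ) = j - s then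
    (if s % 2 = 0 then lookG c j else lookG c (j - s) * lookG c j * (lookG c (j - s))⁻¹)
  else if (k : ℕ) ≤ j then lookG c ((k : ℕ) - 1)
  else c k

lemma invProd (f : ℕ → G) : ∀ m : ℕ,
    ((List.range m).map (fun t => (f (m - 1 - t))⁻¹)).prod *
      ((List.range m).map f).prod = 1 := by
  intro m
  induction m with
  | zero => simp
  | succ m ih =>
    have h1 : (List.range (m + 1)).map (fun t => (f (m + 1 - 1 - t))⁻¹)
        = (f m)⁻¹ :: (List.range m).map (fun t => (f (m - 1 - t))⁻¹) := by
      rw [List.range_succ_eq_map, List.map_cons, List.map_map]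
      refine congrArg₂ _ (by norm_num) ?_
      refine List.map_congr_left fun a ha => ?_
      simp only [Function.comp]
      congr 2
      omega
    have h2 : (List.range (m + 1)).map f = (List.range m).map f ++ [f m] := by
      rw [List.range_succ, List.map_append]; rfl
    rw [h1, h2, List.prod_cons, List.prod_append, List.prod_singleton]
    calc (f m)⁻¹ * ((List.range m).map (fun t => (f (m - 1 - t))⁻¹)).prod *
          (((List.range m).map f).prod * f m)
        = (f m)⁻¹ * (((List.range m).map (fun t => (f (m - 1 - t))⁻¹)).prod *
          ((List.range m).map f).prod) * f m := by group
      _ = 1 := by rw [ih]; group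

lemma key_induction (φ : BraidGroup n →* Equiv.Perm (Fin n → G)) (hφ : IsHurwitzAction φ)
    (i j : ℕ) (hjn : j < n) (c : Fin n → G)
    (Hpair : ∀ t, i < t → t + 1 < j → t % 2 = j % 2 → lookG c t = lookG c (t + 1))
    (Hinv : ∀ t, i < t → t < j → lookG c t * lookG c t = 1) :
    ∀ s, s ≤ j - 1 - i →
      φ (((List.range s).map (fun t => braidGen n (j - s + t))).prod) c = Fham j c s := by
  intro s
  induction s with
  | zero =>
    intro _
    simp only [List.range_zero, List.map_nil, List.prod_nil, map_one, Equiv.Perm.one_apply]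
    funext k
    simp only [Fham, Nat.sub_zero]
    by_cases h1 : (k : ℕ) < j
    · rw [if_pos h1]
    · rw [if_neg h1]
      by_cases h2 : (k : ℕ) = j
      · rw [if_pos h2, if_pos (by norm_num), ← lookG_coe c k, h2]
      · rw [if_neg h2, if_neg (by omega)]
  | succ s ih =>
    intro hs
    have hsj : s + 1 ≤ j - 1 - i := hs
    have hij : i + 2 ≤ j := by omega
    have hlist : (List.range (s + 1)).map (fun t => braidGen n (j - (s + 1) + t))
        = braidGen n (j - s - 1) :: (List.range s).map (fun t => braidGen n (j - s + t)) := by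
      rw [List.range_succ_eq_map, List.map_cons, List.map_map]
      refine congrArg₂ _ (by congr 1) ?_
      refine List.map_congr_left fun a ha => ?_
      simp only [Function.comp]
      congr 1
      omega
    rw [hlist, List.prod_cons, map_mul, Equiv.Perm.mul_apply, ih (by omega),
      hφ (j - s - 1) (by omega)]
    -- now prove hurwitzMove (j-s-1) (Fham j c s) = Fham j c (s+1)
    have hts : j - (s + 1) = j - s - 1 := by omega
    have htlt : j - s - 1 < n := by omega
    have ht1lt : j - s - 1 + 1 < n := by omega
    have hFlow : Fham j c s ⟨j - s - 1, htlt⟩ = lookG c (j - s - 1) := by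
      simp only [Fham]
      rw [if_pos (show ((⟨j - s - 1, htlt⟩ : Fin n) : ℕ) < j - s by simp only [Fin.val_mk]; omega), lookG_mk c _ htlt]
    have hFmid : Fham j c s ⟨j - s - 1 + 1, ht1lt⟩
        = (if s % 2 = 0 then lookG c j
          else lookG c (j - s) * lookG c j * (lookG c (j - s))⁻¹) := by
      simp only [Fham]
      rw [if_neg (show ¬ ((⟨j - s - 1 + 1, ht1lt⟩ : Fin n) : ℕ) < j - s by simp only [Fin.val_mk]; omega),
        if_pos (show ((⟨j - s - 1 + 1, ht1lt⟩ : Fin n) : ℕ) = j - s by simp only [Fin.val_mk]; omega)]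
    funext k
    simp only [hurwitzMove]
    by_cases hk1 : (k : ℕ) = j - s - 1
    · rw [dif_pos hk1, dif_pos ht1lt, hFlow, hFmid]
      have hkform : Fham j c (s + 1) k
          = (if (s + 1) % 2 = 0 then lookG c j
            else lookG c (j - (s + 1)) * lookG c j * (lookG c (j - (s + 1)))⁻¹) := by
        simp only [Fham]
        rw [if_neg (by omega), if_pos (by omega)]
      rw [hkform]
      rcases Nat.even_or_odd s with he | ho
      · have h1 : s % 2 = 0 := Nat.even_iff.mp he
        have h2 : (s + 1) % 2 = 1 := by omega
        rw [if_pos h1, if_neg (by omega), hts]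
      · have h1 : s % 2 = 1 := Nat.odd_iff.mp ho
        have h2 : (s + 1) % 2 = 0 := by omega
        rw [if_neg (by omega), if_pos h2]
        have hp : lookG c (j - s - 1) = lookG c (j - s) := by
          have := Hpair (j - s - 1) (by omega) (by omega) (by omega)
          rwa [show j - s - 1 + 1 = j - s by omega] at this
        have hv : lookG c (j - s) * lookG c (j - s) = 1 :=
          Hinv (j - s) (by omega) (by omega)
        rw [hp]
        calc lookG c (j - s) * (lookG c (j - s) * lookG c j * (lookG c (j - s))⁻¹) *
              (lookG c (j - s))⁻¹
            = (lookG c (j - s) * lookG c (j - s)) * lookG c j *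
              ((lookG c (j - s)) * lookG c (j - s))⁻¹ := by group
          _ = lookG c j := by rw [hv]; group
    · rw [dif_neg hk1]
      by_cases hk2 : (k : ℕ) = j - s - 1 + 1
      · rw [dif_pos hk2, hFlow]
        simp only [Fham]
        rw [if_neg (by omega), if_neg (by omega), if_pos (by omega)]
        congr 1
        omega
      · rw [dif_neg hk2]
        simp only [Fham]
        split_ifs <;> first | rfl | omega

lemma swap_comm_of_ne {α : Type*} [DecidableEq α] {a b x y : α}
    (h1 : a ≠ x) (h2 : a ≠ y) (h3 : b ≠ x) (h4 : b ≠ y) :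
    Equiv.swap a b * Equiv.swap x y = Equiv.swap x y * Equiv.swap a b := by
  refine (Equiv.Perm.Disjoint.commute ?_).eq
  intro z
  by_cases hz1 : z = a
  · right; subst hz1; exact Equiv.swap_apply_of_ne_of_ne h1 h2
  by_cases hz2 : z = b
  · right; subst hz2; exact Equiv.swap_apply_of_ne_of_ne h3 h4
  · left; exact Equiv.swap_apply_of_ne_of_ne hz1 hz2

lemma lookG_swapped (c : Fin n → G) (i j t : ℕ) (h1 : t ≠ i) (h2 : t ≠ j) :
    lookG (fun k => if (k : ℕ) = i then lookG c j else if (k : ℕ) = j then lookG c i else c k) t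
      = lookG c t := by
  simp only [lookG]
  by_cases h : t < n
  · rw [dif_pos h, dif_pos h, if_neg (show ¬((⟨t, h⟩ : Fin n) : ℕ) = i from h1),
      if_neg (show ¬((⟨t, h⟩ : Fin n) : ℕ) = j from h2)]
  · rw [dif_neg h, dif_neg h]

lemma lookG_swapped_i (c : Fin n → G) (i j : ℕ) (hi : i < n) (hij : i ≠ j) :
    lookG (fun k => if (k : ℕ) = i then lookG c j else if (k : ℕ) = j then lookG c i else c k) i
      = lookG c j := by
  rw [lookG_mk _ _ hi, if_pos (show ((⟨i, hi⟩ : Fin n) : ℕ) = i from rfl)]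

lemma lookG_swapped_j (c : Fin n → G) (i j : ℕ) (hj : j < n) (hij : i ≠ j) :
    lookG (fun k => if (k : ℕ) = i then lookG c j else if (k : ℕ) = j then lookG c i else c k) j
      = lookG c i := by
  rw [lookG_mk _ _ hj, if_neg (show ¬((⟨j, hj⟩ : Fin n) : ℕ) = i from fun h => hij h.symm),
    if_pos (show ((⟨j, hj⟩ : Fin n) : ℕ) = j from rfl)]

lemma zAct (φ : BraidGroup n →* Equiv.Perm (Fin n → G)) (hφ : IsHurwitzAction φ)
    (i j : ℕ) (hij3 : i + 3 ≤ j) (hpar : (j - i) % 2 = 1) (hjn : j < n)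
    (c : Fin n → G)
    (Hpair : ∀ t, i < t → t + 1 < j → t % 2 = j % 2 → lookG c t = lookG c (t + 1))
    (Hinv : ∀ t, i < t → t < j → lookG c t * lookG c t = 1)
    (Hcomm : lookG c i * lookG c j = lookG c j * lookG c i) :
    φ (zBraid n i j) c = fun k : Fin n =>
      if (k : ℕ) = i then lookG c j else if (k : ℕ) = j then lookG c i else c k := by
  set m := j - 1 - i with hm
  have hme : m % 2 = 0 := by omega
  have hm2 : 2 ≤ m := by omega
  have hjm : j - m = i + 1 := by omega
  set W := ((List.range m).map (fun t => braidGen n (i + 1 + t))).prod with hW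
  have hpre : ((List.range m).map (fun t => (braidGen n (j - 1 - t))⁻¹)).prod = W⁻¹ := by
    apply eq_inv_of_mul_eq_one_left
    have hmap : (List.range m).map (fun t => (braidGen n (j - 1 - t))⁻¹)
        = (List.range m).map (fun t => ((fun u => braidGen n (i + 1 + u)) (m - 1 - t))⁻¹) := by
      refine List.map_congr_left fun a ha => ?_
      have ham : a < m := List.mem_range.mp ha
      simp only
      congr 2
      omega
    rw [hmap, hW]
    exact invProd _ m
  have hzb : zBraid n i j = W⁻¹ * braidGen n i * W := by
    simp only [zBraid]
    rw [← hm, hpre]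
  have hWform : W = ((List.range m).map (fun t => braidGen n (j - m + t))).prod := by
    rw [hW]
    congr 1
    refine List.map_congr_left fun a ha => ?_
    congr 1
    omega
  set c2 : Fin n → G :=
    (fun k => if (k : ℕ) = i then lookG c j else if (k : ℕ) = j then lookG c i else c k)
    with hc2
  have hlook2 : ∀ t, i < t → t < j → lookG c2 t = lookG c t := by
    intro t h1 h2
    rw [hc2]
    exact lookG_swapped c i j t (by omega) (by omega)
  have Hpair2 : ∀ t, i < t → t + 1 < j → t % 2 = j % 2 → lookG c2 t = lookG c2 (t + 1) := by
    intro t h1 h2 h3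
    rw [hlook2 t h1 (by omega), hlook2 (t + 1) (by omega) h2]
    exact Hpair t h1 h2 h3
  have Hinv2 : ∀ t, i < t → t < j → lookG c2 t * lookG c2 t = 1 := by
    intro t h1 h2
    rw [hlook2 t h1 h2]
    exact Hinv t h1 h2
  have hkey1 := key_induction φ hφ i j hjn c Hpair Hinv m le_rfl
  have hkey2 := key_induction φ hφ i j hjn c2 Hpair2 Hinv2 m le_rfl
  have hphiW1 : φ W c = Fham j c m := by rw [hWform]; exact hkey1
  have hphiW2 : φ W c2 = Fham j c2 m := by rw [hWform]; exact hkey2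
  have hin : i + 1 < n := by omega
  have hi1n : i < n := by omega
  have hmain : hurwitzMove i (Fham j c m) = Fham j c2 m := by
    funext k
    simp only [hurwitzMove]
    by_cases hk1 : (k : ℕ) = i
    · rw [dif_pos hk1, dif_pos hin]
      have e1 : Fham j c m ⟨i, Nat.lt_of_succ_lt hin⟩ = lookG c i := by
        simp only [Fham]
        rw [if_pos (show ((⟨i, Nat.lt_of_succ_lt hin⟩ : Fin n) : ℕ) < j - m by
          simp only [Fin.val_mk]; omega), lookG_mk c _ (Nat.lt_of_succ_lt hin)]
      have e2 : Fham j c m ⟨i + 1, hin⟩ = lookG c j := by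
        simp only [Fham]
        rw [if_neg (show ¬((⟨i + 1, hin⟩ : Fin n) : ℕ) < j - m by
            simp only [Fin.val_mk]; omega),
          if_pos (show ((⟨i + 1, hin⟩ : Fin n) : ℕ) = j - m by
            simp only [Fin.val_mk]; omega),
          if_pos hme]
      have e3 : Fham j c2 m k = lookG c j := by
        simp only [Fham]
        rw [if_pos (show (k : ℕ) < j - m by omega), hc2]
        simp only
        rw [if_pos hk1]
      rw [e1, e2, e3, Hcomm, mul_inv_cancel_right]
    · rw [dif_neg hk1]
      by_cases hk2 : (k : ℕ) = i + 1
      · rw [dif_pos hk2]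
        have e1 : Fham j c m ⟨i, by omega⟩ = lookG c i := by
          simp only [Fham]
          rw [if_pos (show ((⟨i, by omega⟩ : Fin n) : ℕ) < j - m by
            simp only [Fin.val_mk]; omega), lookG_mk c _ (by omega)]
        have e3 : Fham j c2 m k = lookG c i := by
          simp only [Fham]
          rw [if_neg (show ¬(k : ℕ) < j - m by omega),
            if_pos (show (k : ℕ) = j - m by omega), if_pos hme, hc2,
            lookG_swapped_j c i j hjn (by omega)]
        rw [e1, e3]
      · rw [dif_neg hk2]
        simp only [Fham]
        by_cases h1 : (k : ℕ) < j - m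
        · rw [if_pos h1, if_pos h1, hc2]
          simp only
          rw [if_neg hk1, if_neg (show ¬(k : ℕ) = j by omega)]
        · have h2 : j - m < (k : ℕ) := by omega
          by_cases h3 : (k : ℕ) ≤ j
          · rw [if_neg (by omega), if_neg (by omega), if_pos h3,
              if_neg (by omega), if_neg (by omega), if_pos h3, hc2,
              lookG_swapped c i j _ (by omega) (by omega)]
          · rw [if_neg (by omega), if_neg (by omega), if_neg h3,
              if_neg (by omega), if_neg (by omega), if_neg h3, hc2]
            simp only
            rw [if_neg hk1, if_neg (show ¬(k : ℕ) = j by omega)]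
  have happ : φ (zBraid n i j) c = (φ W)⁻¹ ((φ (braidGen n i)) ((φ W) c)) := by
    rw [hzb, map_mul, map_mul, map_inv, Equiv.Perm.mul_apply, Equiv.Perm.mul_apply]
  rw [happ, hphiW1, hφ i hin, hmain, ← hphiW2]
  exact Equiv.symm_apply_apply _ _

end ZAux


/-- With respect to the standard coloring, `z_{i,j}` (for `i` odd, `j - i` odd
and `≥ 3`, `j ≤ 2d-4`) is Type 2: its square fixes the standard tuple but the
half-twist itself does not. -/
theorem zBraid_type_two (d n : ℕ) (hd : 3 ≤ d) (hn : 2 * d - 2 ≤ n)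
    (i j : ℕ) (hi : i % 2 = 1) (hij : (j - i) % 2 = 1) (hij3 : i + 3 ≤ j)
    (hj : j ≤ 2 * d - 4)
    (φ : BraidGroup n →* Equiv.Perm (Fin n → Equiv.Perm (Fin d)))
    (hφ : IsHurwitzAction φ) :
    φ (zBraid n i j ^ 2) (stdTuple d n) = stdTuple d n ∧
    φ (zBraid n i j) (stdTuple d n) ≠ stdTuple d n := by
  have hjn : j < n := by omega
  have hin' : i < n := by omega
  have hjev : j % 2 = 0 := by omega
  set c0 : Fin n → Equiv.Perm (Fin d) := stdTuple d n with hc0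
  have hstd : ∀ t, t + 4 ≤ 2 * d → ∀ h : t < n, lookG c0 t =
      Equiv.swap (⟨d - 2 - t / 2, by omega⟩ : Fin d) ⟨d - 1 - t / 2, by omega⟩ := by
    intro t h4 h
    rw [lookG_mk _ _ h, hc0]
    simp only [stdTuple]
    rw [dif_pos (show ((⟨t, h⟩ : Fin n) : ℕ) + 4 ≤ 2 * d from h4)]
  have Hpair : ∀ t, i < t → t + 1 < j → t % 2 = j % 2 → lookG c0 t = lookG c0 (t + 1) := by
    intro t h1 h2 h3
    rw [hstd t (by omega) (by omega), hstd (t + 1) (by omega) (by omega)]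
    exact congrArg₂ Equiv.swap (Fin.mk_eq_mk.2 (by omega)) (Fin.mk_eq_mk.2 (by omega))
  have Hinv : ∀ t, i < t → t < j → lookG c0 t * lookG c0 t = 1 := by
    intro t h1 h2
    rw [hstd t (by omega) (by omega)]
    exact Equiv.swap_mul_self _ _
  have Hcomm : lookG c0 i * lookG c0 j = lookG c0 j * lookG c0 i := by
    rw [hstd i (by omega) (by omega), hstd j (by omega) (by omega)]
    apply swap_comm_of_ne <;> (simp only [ne_eq, Fin.mk.injEq]; omega)
  have h1 := zAct φ hφ i j hij3 hij hjn c0 Hpair Hinv Hcomm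
  set c1 : Fin n → Equiv.Perm (Fin d) := fun k : Fin n =>
    if (k : ℕ) = i then lookG c0 j else if (k : ℕ) = j then lookG c0 i else c0 k with hc1
  have hl2 : ∀ t, i < t → t < j → lookG c1 t = lookG c0 t := by
    intro t a b
    rw [hc1]
    exact lookG_swapped c0 i j t (by omega) (by omega)
  have Hpair1 : ∀ t, i < t → t + 1 < j → t % 2 = j % 2 → lookG c1 t = lookG c1 (t + 1) := by
    intro t a b hc
    rw [hl2 t a (by omega), hl2 (t + 1) (by omega) b]
    exact Hpair t a b hc
  have Hinv1 : ∀ t, i < t → t < j → lookG c1 t * lookG c1 t = 1 := by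
    intro t a b
    rw [hl2 t a b]
    exact Hinv t a b
  have Hcomm1 : lookG c1 i * lookG c1 j = lookG c1 j * lookG c1 i := by
    rw [hc1, lookG_swapped_i c0 i j hin' (by omega), lookG_swapped_j c0 i j hjn (by omega)]
    exact Hcomm.symm
  have h2 := zAct φ hφ i j hij3 hij hjn c1 Hpair1 Hinv1 Hcomm1
  have hc1c0 : (fun k : Fin n =>
      if (k : ℕ) = i then lookG c1 j else if (k : ℕ) = j then lookG c1 i else c1 k) = c0 := by
    funext k
    by_cases hk1 : (k : ℕ) = i
    · rw [if_pos hk1, hc1, lookG_swapped_j c0 i j hjn (by omega), ← lookG_coe c0 k, hk1]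
    · rw [if_neg hk1]
      by_cases hk2 : (k : ℕ) = j
      · rw [if_pos hk2, hc1, lookG_swapped_i c0 i j hin' (by omega), ← lookG_coe c0 k, hk2]
      · rw [if_neg hk2, hc1]
        simp only
        rw [if_neg hk1, if_neg hk2]
  constructor
  · rw [sq, map_mul, Equiv.Perm.mul_apply]
    show φ (zBraid n i j) (φ (zBraid n i j) c0) = c0
    rw [h1, h2, hc1c0]
  · show φ (zBraid n i j) c0 ≠ c0
    intro heq
    rw [h1] at heq
    have hv := congrFun heq ⟨i, hin'⟩
    rw [hc1] at hv
    simp only [Fin.val_mk, eq_self_iff_true, if_true] at hv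
    have hvi : c0 ⟨i, hin'⟩
        = Equiv.swap (⟨d - 2 - i / 2, by omega⟩ : Fin d) ⟨d - 1 - i / 2, by omega⟩ := by
      rw [← lookG_mk c0 i hin', hstd i (by omega) hin']
    rw [hvi, hstd j (by omega) hjn] at hv
    have happly := congrArg (fun σ : Equiv.Perm (Fin d) => σ ⟨d - 2 - j / 2, by omega⟩) hv
    rw [Equiv.swap_apply_left,
      Equiv.swap_apply_of_ne_of_ne
        (by simp only [ne_eq, Fin.mk.injEq]; omega)
        (by simp only [ne_eq, Fin.mk.injEq]; omega)] at happly
    simp only [Fin.mk.injEq] at happly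
    omega
end

section
/- Let d ≥ 3 and n ≥ 2d+1 be integers. In B_n define h = (σ_{n−3} σ_{n−4} ⋯ σ_{2d−4}) · σ_{2d−5}² · (σ_{2d−4} σ_{2d−3} ⋯ σ_{n−4}) · σ_{n−3}² · (σ_{n−4} σ_{n−5} ⋯ σ_{2d−4}) · σ_{2d−5}, where the first and third parenthesized products run over decreasing indices from n−3 (respectively n−4) down to 2d−4 and the second runs over increasing indices from 2d−4 up to n−4, and set d_{n−3} = h⁻¹ σ_{n−4} h. Then, under the Hurwitz action on (S_d)^n, (d_{n−3} σ_{n−2}⁻¹) · c⁰ = c⁰; that is, the element d_{n−3} σ_{n−2}⁻¹ (the normal generator of the kernel of the lifting homomorphism arising from the lantern relation) is liftable with respect to the standard coloring. -/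
/-- `h = (σ_{n-3} σ_{n-4} ⋯ σ_{2d-4}) · σ_{2d-5}² · (σ_{2d-4} σ_{2d-3} ⋯ σ_{n-4}) ·
σ_{n-3}² · (σ_{n-4} σ_{n-5} ⋯ σ_{2d-4}) · σ_{2d-5}`, where the first and third
products run over decreasing indices and the second over increasing indices. -/
def lanternConjWord (n d : ℕ) : BraidGroup n :=
  ((List.range (n - 2 * d + 2)).map (fun t => braidGen n (n - 3 - t))).prod *
    braidGen n (2 * d - 5) ^ 2 *
    ((List.range (n - 2 * d + 1)).map (fun t => braidGen n (2 * d - 4 + t))).prod *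
    braidGen n (n - 3) ^ 2 *
    ((List.range (n - 2 * d + 1)).map (fun t => braidGen n (n - 4 - t))).prod *
    braidGen n (2 * d - 5)

/-- `d_{n-3} = h⁻¹ σ_{n-4} h`. -/
def lanternD (n d : ℕ) : BraidGroup n :=
  (lanternConjWord n d)⁻¹ * braidGen n (n - 4) * lanternConjWord n d

section H
variable {G : Type*} [Group G] {n : ℕ}

lemma hurwitzMove_eval (i : ℕ) (hi : i + 1 < n) (c : Fin n → G) (k : Fin n) :
    hurwitzMove i c k =
      if (k : ℕ) = i then c ⟨i, by omega⟩ * c ⟨i + 1, hi⟩ * (c ⟨i, by omega⟩)⁻¹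
      else if (k : ℕ) = i + 1 then c ⟨i, by omega⟩ else c k := by
  unfold hurwitzMove
  split_ifs with h1 h2 <;> first | rfl | (exact absurd hi (by assumption))

omit [Group G] in
lemma fin_congr (c : Fin n → G) {i j : ℕ} (hi : i < n) (hj : j < n) (h : i = j) :
    c ⟨i, hi⟩ = c ⟨j, hj⟩ := by subst h; rfl

omit [Group G] in
lemma fin_congr' (c : Fin n → G) {i : ℕ} (hi : i < n) (k : Fin n) (h : (k : ℕ) = i) :
    c k = c ⟨i, hi⟩ := by cases k; simp_all

lemma hurwitzMove_fix (i : ℕ) (hi : i + 1 < n) (c : Fin n → G)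
    (h : c ⟨i, by omega⟩ = c ⟨i + 1, hi⟩) : hurwitzMove i c = c := by
  funext k
  rw [hurwitzMove_eval i hi]
  split_ifs with h1 h2
  · rw [← h, mul_inv_cancel_right]
    exact (fin_congr' c (by omega) k h1).symm
  · rw [h]
    exact (fin_congr' c hi k h2).symm
  · rfl

lemma prod_range_succ_map {M : Type*} [Monoid M] (f : ℕ → M) (K : ℕ) :
    ((List.range (K + 1)).map f).prod = ((List.range K).map f).prod * f K := by
  rw [List.range_succ, List.map_append, List.prod_append, List.map_singleton,
    List.prod_singleton]

lemma hurwitzMove_at (i : ℕ) (hi : i + 1 < n) (c : Fin n → G) :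
    hurwitzMove i c ⟨i, by omega⟩ =
      c ⟨i, by omega⟩ * c ⟨i + 1, hi⟩ * (c ⟨i, by omega⟩)⁻¹ := by
  rw [hurwitzMove_eval i hi]
  exact if_pos rfl

lemma hurwitzMove_at_succ (i : ℕ) (hi : i + 1 < n) (c : Fin n → G) :
    hurwitzMove i c ⟨i + 1, hi⟩ = c ⟨i, by omega⟩ := by
  rw [hurwitzMove_eval i hi, if_neg (by simp), if_pos rfl]

lemma hurwitzMove_at_other (i : ℕ) (hi : i + 1 < n) (c : Fin n → G) (k : Fin n)
    (h1 : (k : ℕ) ≠ i) (h2 : (k : ℕ) ≠ i + 1) : hurwitzMove i c k = c k := by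
  rw [hurwitzMove_eval i hi, if_neg h1, if_neg h2]

variable (φ : BraidGroup n →* Equiv.Perm (Fin n → G)) (hφ : IsHurwitzAction φ)

include hφ in
lemma sweep_up (b : ℕ) (hb : b + 1 < n) (a : G) :
    ∀ (K lo : ℕ) (h : lo + K = b + 1) (c : Fin n → G),
      (∀ j (hj : j < n), lo + 1 ≤ j → j ≤ b + 1 → c ⟨j, hj⟩ = a) →
      ∀ k : Fin n,
        φ (((List.range K).map (fun t => braidGen n (b - t))).prod) c k =
          if lo ≤ (k : ℕ) ∧ (k : ℕ) ≤ b then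
            c ⟨lo, by omega⟩ * a * (c ⟨lo, by omega⟩)⁻¹
          else if (k : ℕ) = b + 1 then c ⟨lo, by omega⟩
          else c k := by
  intro K
  induction K with
  | zero =>
    intro lo h c hc k
    simp only [List.range_zero, List.map_nil, List.prod_nil, map_one,
      Equiv.Perm.coe_one, id_eq]
    split_ifs with h1 h2
    · exact absurd h1 (by omega)
    · exact fin_congr' c (by omega) k (by omega)
    · rfl
  | succ K ih =>
    intro lo h c hc k
    rw [prod_range_succ_map, map_mul, Equiv.Perm.mul_apply]
    have hbK : b - K = lo := by omega
    have hlo : lo + 1 < n := by omega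
    rw [hbK, hφ lo hlo c]
    have hc' : ∀ j (hj : j < n), (lo + 1) + 1 ≤ j → j ≤ b + 1 →
        hurwitzMove lo c ⟨j, hj⟩ = a := by
      intro j hj h1 h2
      rw [hurwitzMove_eval lo hlo]
      simp only [Fin.val_mk ..]
      rw [if_neg (by omega), if_neg (by omega)]
      exact hc j hj (by omega) h2
    rw [ih (lo + 1) (by omega) _ hc' k]
    have e1 : hurwitzMove lo c ⟨lo + 1, hlo⟩ = c ⟨lo, by omega⟩ := by
      rw [hurwitzMove_eval lo hlo]
      simp only [Fin.val_mk ..]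
      rw [if_neg (by omega)]
      simp
    have e3 : ∀ m : Fin n, (m : ℕ) ≠ lo → (m : ℕ) ≠ lo + 1 → hurwitzMove lo c m = c m := by
      intro m m1 m2
      rw [hurwitzMove_eval lo hlo, if_neg m1, if_neg m2]
    split_ifs <;>
      first
        | (exfalso; omega)
        | (rw [e1])
        | (rw [e3 k (by omega) (by omega)])
        | (rw [hurwitzMove_eval lo hlo, if_pos (show (k : ℕ) = lo by omega),
            hc (lo + 1) hlo (by omega) (by omega)])

include hφ in
lemma sweep_down (lo : ℕ) (a : G) :
    ∀ (K : ℕ) (h : lo + K < n) (c : Fin n → G),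
      (∀ j (hj : j < n), lo ≤ j → j + 1 ≤ lo + K → c ⟨j, hj⟩ = a) →
      ∀ k : Fin n,
        φ (((List.range K).map (fun t => braidGen n (lo + t))).prod) c k =
          if (k : ℕ) = lo ∧ 1 ≤ K then a ^ K * c ⟨lo + K, by omega⟩ * (a ^ K)⁻¹
          else if lo + 1 ≤ (k : ℕ) ∧ (k : ℕ) ≤ lo + K then a
          else c k := by
  intro K
  induction K with
  | zero =>
    intro h c hc k
    simp only [List.range_zero, List.map_nil, List.prod_nil, map_one,
      Equiv.Perm.coe_one, id_eq]
    rw [if_neg (by omega), if_neg (by omega)]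
  | succ K ih =>
    intro h c hc k
    rw [prod_range_succ_map, map_mul, Equiv.Perm.mul_apply]
    have hK : lo + K + 1 < n := by omega
    rw [hφ (lo + K) hK c]
    have hc' : ∀ j (hj : j < n), lo ≤ j → j + 1 ≤ lo + K →
        hurwitzMove (lo + K) c ⟨j, hj⟩ = a := by
      intro j hj h1 h2
      rw [hurwitzMove_at_other (lo + K) hK c _ (by simp; omega) (by simp; omega)]
      exact hc j hj h1 (by omega)
    rw [ih (by omega) _ hc' k]
    have f1 : hurwitzMove (lo + K) c ⟨lo + K, by omega⟩ =
        a * c ⟨lo + K + 1, hK⟩ * a⁻¹ := by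
      rw [hurwitzMove_at (lo + K) hK c, hc (lo + K) (by omega) (by omega) (by omega)]
    have f2 : ∀ m : Fin n, (m : ℕ) = lo + K + 1 → hurwitzMove (lo + K) c m = a := by
      intro m hm
      rw [fin_congr' (hurwitzMove (lo + K) c) hK m hm, hurwitzMove_at_succ (lo + K) hK c,
        hc (lo + K) (by omega) (by omega) (by omega)]
    have f3 : ∀ m : Fin n, (m : ℕ) ≠ lo + K → (m : ℕ) ≠ lo + K + 1 →
        hurwitzMove (lo + K) c m = c m :=
      fun m h1 h2 => hurwitzMove_at_other (lo + K) hK c m h1 h2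
    have hpow : ∀ v : G, a ^ K * (a * v * a⁻¹) * (a ^ K)⁻¹ =
        a ^ (K + 1) * v * (a ^ (K + 1))⁻¹ := by
      intro v
      rw [pow_succ, mul_inv_rev]
      group
    split_ifs <;>
      first
        | (exfalso; omega)
        | rfl
        | (rw [f1, hpow]
           exact congrArg₂ _ (congrArg₂ _ rfl (fin_congr c _ _ (by omega))) rfl)
        | (rw [f2 k (by omega)])
        | (rw [f3 k (by omega) (by omega)])
        | (obtain rfl : K = 0 := by omega
           rw [fin_congr' (hurwitzMove (lo + 0) c) (show lo + 0 < n by omega) k (by omega),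
             hurwitzMove_at (lo + 0) (by omega) c,
             hc (lo + 0) (by omega) (by omega) (by omega)]
           simp [pow_succ])

set_option maxHeartbeats 2000000 in
include hφ in
lemma main_comp (d : ℕ) (hd : 3 ≤ d) (hn : 2 * d + 1 ≤ n)
    (c : Fin n → G) (τ : G)
    (hc : ∀ j (hj : j < n), 2 * d - 4 ≤ j → c ⟨j, hj⟩ = τ) :
    φ (lanternD n d * (braidGen n (n - 2))⁻¹) c = c := by
  have hm5 : 2 * d - 5 + 1 < n := by omega
  have hn3 : n - 3 + 1 < n := by omega
  have hn4 : n - 4 + 1 < n := by omega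
  have hn2 : n - 2 + 1 < n := by omega
  obtain ⟨ρ, hρ⟩ : ∃ x : G, x = c ⟨2 * d - 5, by omega⟩ := ⟨_, rfl⟩
  obtain ⟨β, hβ⟩ : ∃ x : G, x = ρ * τ * ρ⁻¹ := ⟨_, rfl⟩
  obtain ⟨γ, hγ⟩ : ∃ x : G, x = β * ρ * β⁻¹ := ⟨_, rfl⟩
  obtain ⟨xx, hx⟩ : ∃ x : G, x = β ^ (n - 2 * d + 1) * γ * (β ^ (n - 2 * d + 1))⁻¹ := ⟨_, rfl⟩
  obtain ⟨w, hw⟩ : ∃ x : G, x = β * xx * β⁻¹ := ⟨_, rfl⟩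
  obtain ⟨z, hz⟩ : ∃ x : G, x = w * β * w⁻¹ := ⟨_, rfl⟩
  obtain ⟨T1, hT1⟩ : ∃ f : Fin n → G, f = fun k : Fin n =>
      if (k : ℕ) = 2 * d - 5 then β else if (k : ℕ) = 2 * d - 4 then ρ else c k := ⟨_, rfl⟩
  obtain ⟨T2, hT2⟩ : ∃ f : Fin n → G, f = fun k : Fin n =>
      if 2 * d - 5 ≤ (k : ℕ) ∧ (k : ℕ) ≤ n - 4 then β
      else if (k : ℕ) = n - 3 then ρ else c k := ⟨_, rfl⟩
  obtain ⟨T2h, hT2h⟩ : ∃ f : Fin n → G, f = fun k : Fin n =>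
      if 2 * d - 5 ≤ (k : ℕ) ∧ (k : ℕ) ≤ n - 4 then β
      else if (k : ℕ) = n - 3 then β else if (k : ℕ) = n - 2 then ρ else c k := ⟨_, rfl⟩
  obtain ⟨T3, hT3⟩ : ∃ f : Fin n → G, f = fun k : Fin n =>
      if 2 * d - 5 ≤ (k : ℕ) ∧ (k : ℕ) ≤ n - 4 then β
      else if (k : ℕ) = n - 3 then γ else if (k : ℕ) = n - 2 then β else c k := ⟨_, rfl⟩
  obtain ⟨T4, hT4⟩ : ∃ f : Fin n → G, f = fun k : Fin n =>
      if (k : ℕ) = 2 * d - 4 then xx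
      else if 2 * d - 5 ≤ (k : ℕ) ∧ (k : ℕ) ≤ n - 2 then β else c k := ⟨_, rfl⟩
  obtain ⟨T4h, hT4h⟩ : ∃ f : Fin n → G, f = fun k : Fin n =>
      if (k : ℕ) = 2 * d - 5 then w else if (k : ℕ) = 2 * d - 4 then β
      else if 2 * d - 5 ≤ (k : ℕ) ∧ (k : ℕ) ≤ n - 2 then β else c k := ⟨_, rfl⟩
  obtain ⟨T5, hT5⟩ : ∃ f : Fin n → G, f = fun k : Fin n =>
      if (k : ℕ) = 2 * d - 5 then z else if (k : ℕ) = 2 * d - 4 then w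
      else if 2 * d - 5 ≤ (k : ℕ) ∧ (k : ℕ) ≤ n - 2 then β else c k := ⟨_, rfl⟩
  obtain ⟨T6, hT6⟩ : ∃ f : Fin n → G, f = fun k : Fin n =>
      if 2 * d - 5 ≤ (k : ℕ) ∧ (k : ℕ) ≤ n - 3 then z
      else if (k : ℕ) = n - 2 then w else c k := ⟨_, rfl⟩
  -- stage 1 : σ_{2d-5} on c
  have E1 : φ (braidGen n (2 * d - 5)) c = T1 := by
    rw [hφ _ hm5 c]
    funext k
    by_cases k1 : (k : ℕ) = 2 * d - 5
    · rw [fin_congr' (hurwitzMove (2 * d - 5) c) (by omega) k k1,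
        hurwitzMove_at _ hm5 c, hc (2 * d - 5 + 1) hm5 (by omega)]
      simp only [hT1]
      rw [if_pos k1, hβ, hρ]
    · by_cases k2 : (k : ℕ) = 2 * d - 5 + 1
      · rw [fin_congr' (hurwitzMove (2 * d - 5) c) hm5 k k2, hurwitzMove_at_succ _ hm5 c]
        simp only [hT1]
        rw [if_neg (by omega), if_pos (by omega), hρ]
      · rw [hurwitzMove_at_other _ hm5 c k k1 k2]
        simp only [hT1]
        rw [if_neg k1, if_neg (by omega)]
  -- stage 2 : ascending sweep σ_{2d-4} … σ_{n-4} on T1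
  have E2 : φ (((List.range (n - 2 * d + 1)).map (fun t => braidGen n (n - 4 - t))).prod) T1
      = T2 := by
    have hbl : ∀ j (hj : j < n), 2 * d - 4 + 1 ≤ j → j ≤ n - 4 + 1 → T1 ⟨j, hj⟩ = τ := by
      intro j hj h1 h2
      simp only [hT1, Fin.val_mk ..]
      rw [if_neg (by omega), if_neg (by omega)]
      exact hc j hj (by omega)
    funext k
    rw [sweep_up φ hφ (n - 4) (by omega) τ (n - 2 * d + 1) (2 * d - 4) (by omega) T1 hbl k]
    simp only [hT1, hT2, Fin.val_mk ..]
    split_ifs <;>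
      first
        | rfl
        | (exfalso; omega)
        | (rw [hβ])
  -- stage 3 : σ_{n-3}² on T2
  have E3a : φ (braidGen n (n - 3)) T2 = T2h := by
    rw [hφ _ hn3 T2]
    funext k
    by_cases k1 : (k : ℕ) = n - 3
    · rw [fin_congr' (hurwitzMove (n - 3) T2) (by omega) k k1, hurwitzMove_at _ hn3 T2]
      simp only [hT2, hT2h, Fin.val_mk ..]
      rw [hc (n - 3 + 1) hn3 (by omega)]
      split_ifs <;> first | rfl | (exfalso; omega) | (rw [hβ])
    · by_cases k2 : (k : ℕ) = n - 3 + 1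
      · rw [fin_congr' (hurwitzMove (n - 3) T2) hn3 k k2, hurwitzMove_at_succ _ hn3 T2]
        simp only [hT2, hT2h, Fin.val_mk ..]
        split_ifs <;> first | rfl | (exfalso; omega)
      · rw [hurwitzMove_at_other _ hn3 T2 k k1 k2]
        simp only [hT2, hT2h]
        split_ifs <;> first | rfl | (exfalso; omega)
  have E3b : φ (braidGen n (n - 3)) T2h = T3 := by
    rw [hφ _ hn3 T2h]
    funext k
    by_cases k1 : (k : ℕ) = n - 3
    · rw [fin_congr' (hurwitzMove (n - 3) T2h) (by omega) k k1, hurwitzMove_at _ hn3 T2h]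
      simp only [hT2h, hT3, Fin.val_mk ..]
      split_ifs <;> first | rfl | (exfalso; omega) | (rw [hγ])
    · by_cases k2 : (k : ℕ) = n - 3 + 1
      · rw [fin_congr' (hurwitzMove (n - 3) T2h) hn3 k k2, hurwitzMove_at_succ _ hn3 T2h]
        simp only [hT2h, hT3, Fin.val_mk ..]
        split_ifs <;> first | rfl | (exfalso; omega)
      · rw [hurwitzMove_at_other _ hn3 T2h k k1 k2]
        simp only [hT2h, hT3]
        split_ifs <;> first | rfl | (exfalso; omega)
  -- stage 4 : descending sweep σ_{n-4} … σ_{2d-4} on T3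
  have E4 : φ (((List.range (n - 2 * d + 1)).map (fun t => braidGen n (2 * d - 4 + t))).prod) T3
      = T4 := by
    have hbl : ∀ j (hj : j < n), 2 * d - 4 ≤ j → j + 1 ≤ 2 * d - 4 + (n - 2 * d + 1) →
        T3 ⟨j, hj⟩ = β := by
      intro j hj h1 h2
      simp only [hT3, Fin.val_mk ..]
      rw [if_pos (by omega)]
    funext k
    rw [sweep_down φ hφ (2 * d - 4) β (n - 2 * d + 1) (by omega) T3 hbl k]
    simp only [hT3, hT4, Fin.val_mk ..]
    split_ifs <;>
      first
        | rfl
        | (exfalso; omega)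
        | (rw [hx])
  -- stage 5 : σ_{2d-5}² on T4
  have E5a : φ (braidGen n (2 * d - 5)) T4 = T4h := by
    rw [hφ _ hm5 T4]
    funext k
    by_cases k1 : (k : ℕ) = 2 * d - 5
    · rw [fin_congr' (hurwitzMove (2 * d - 5) T4) (by omega) k k1, hurwitzMove_at _ hm5 T4]
      simp only [hT4, hT4h, Fin.val_mk ..]
      split_ifs <;> first | rfl | (exfalso; omega) | (rw [hw])
    · by_cases k2 : (k : ℕ) = 2 * d - 5 + 1
      · rw [fin_congr' (hurwitzMove (2 * d - 5) T4) hm5 k k2, hurwitzMove_at_succ _ hm5 T4]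
        simp only [hT4, hT4h, Fin.val_mk ..]
        split_ifs <;> first | rfl | (exfalso; omega)
      · rw [hurwitzMove_at_other _ hm5 T4 k k1 k2]
        simp only [hT4, hT4h]
        split_ifs <;> first | rfl | (exfalso; omega)
  have E5b : φ (braidGen n (2 * d - 5)) T4h = T5 := by
    rw [hφ _ hm5 T4h]
    funext k
    by_cases k1 : (k : ℕ) = 2 * d - 5
    · rw [fin_congr' (hurwitzMove (2 * d - 5) T4h) (by omega) k k1, hurwitzMove_at _ hm5 T4h]
      simp only [hT4h, hT5, Fin.val_mk ..]
      split_ifs <;> first | rfl | (exfalso; omega) | (rw [hz])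
    · by_cases k2 : (k : ℕ) = 2 * d - 5 + 1
      · rw [fin_congr' (hurwitzMove (2 * d - 5) T4h) hm5 k k2, hurwitzMove_at_succ _ hm5 T4h]
        simp only [hT4h, hT5, Fin.val_mk ..]
        split_ifs <;> first | rfl | (exfalso; omega)
      · rw [hurwitzMove_at_other _ hm5 T4h k k1 k2]
        simp only [hT4h, hT5]
        split_ifs <;> first | rfl | (exfalso; omega)
  -- stage 6 : ascending sweep σ_{2d-4} … σ_{n-3} on T5
  have E6 : φ (((List.range (n - 2 * d + 2)).map (fun t => braidGen n (n - 3 - t))).prod) T5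
      = T6 := by
    have hbl : ∀ j (hj : j < n), 2 * d - 4 + 1 ≤ j → j ≤ n - 3 + 1 → T5 ⟨j, hj⟩ = β := by
      intro j hj h1 h2
      simp only [hT5, Fin.val_mk ..]
      rw [if_neg (by omega), if_neg (by omega), if_pos (by omega)]
    funext k
    rw [sweep_up φ hφ (n - 3) (by omega) β (n - 2 * d + 2) (2 * d - 4) (by omega) T5 hbl k]
    simp only [hT5, hT6, Fin.val_mk ..]
    split_ifs <;>
      first
        | rfl
        | (exfalso; omega)
        | (rw [hz])
  -- conjugating word
  have Ecw : φ (lanternConjWord n d) c = T6 := by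
    unfold lanternConjWord
    simp only [pow_two, map_mul, Equiv.Perm.mul_apply]
    rw [E1, E2, E3a, E3b, E4, E5a, E5b, E6]
  -- σ_{n-2} fixes c
  have Efix : φ (braidGen n (n - 2)) c = c := by
    rw [hφ _ hn2 c]
    exact hurwitzMove_fix (n - 2) hn2 c
      (by rw [hc (n - 2) (by omega) (by omega), hc (n - 2 + 1) hn2 (by omega)])
  -- σ_{n-4} fixes T6
  have E7 : φ (braidGen n (n - 4)) T6 = T6 := by
    rw [hφ _ hn4 T6]
    refine hurwitzMove_fix (n - 4) hn4 T6 ?_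
    simp only [hT6, Fin.val_mk ..]
    split_ifs <;> first | rfl | (exfalso; omega)
  -- assemble
  rw [map_mul, Equiv.Perm.mul_apply, map_inv]
  have hinv : (φ (braidGen n (n - 2)))⁻¹ c = c := by
    conv_lhs => rw [← Efix]
    exact Equiv.symm_apply_apply _ _
  rw [hinv]
  unfold lanternD
  rw [map_mul, map_mul, map_inv, Equiv.Perm.mul_apply, Equiv.Perm.mul_apply, Ecw, E7,
    ← Ecw, Equiv.Perm.inv_def, Equiv.symm_apply_apply]

end H

/-- The element `d_{n-3} σ_{n-2}⁻¹` (the normal generator of the kernel of the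
lifting homomorphism arising from the lantern relation) is liftable with
respect to the standard coloring: it fixes the standard tuple under the
Hurwitz action. -/
theorem lantern_element_liftable (d n : ℕ) (hd : 3 ≤ d) (hn : 2 * d + 1 ≤ n)
    (φ : BraidGroup n →* Equiv.Perm (Fin n → Equiv.Perm (Fin d)))
    (hφ : IsHurwitzAction φ) :
    φ (lanternD n d * (braidGen n (n - 2))⁻¹) (stdTuple d n) = stdTuple d n := by
  refine main_comp φ hφ d hd hn (stdTuple d n)
    (Equiv.swap ⟨0, by omega⟩ ⟨1, by omega⟩) ?_
  intro j hj hge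
  simp only [stdTuple]
  split_ifs with h1 h2
  · have hj4 : j + 4 ≤ 2 * d := by simpa using h1
    congr 1 <;> exact Fin.ext (by simp; omega)
  · rfl
  · exact absurd hd (by omega)
end
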